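/- arXiv:2007.12313 — 7 statements merged into one kernel-verified Lean document; each statement's English description precedes it below -/
import Mathlib

section
/- Theorem 1 (MSE of the NCT estimator, fixed design). Assume the sub-Weibull noise assumption with parameters σ > 0 and α ∈ (0,2]. Fix δ ∈ (0,1), set ρ = (2/√n)(log(2r/δ))^{1/α} and take the threshold τ = σρ. Then, with probability at least 1 − δ, the NCT estimator β̂ with threshold τ satisfies the two-sided bound (1/4)·∑_{j=1}^r min(σρ, |θ_j|)² ≤ MSE(β̂) ≤ 9·∑_{j=1}^r min(σρ, |θ_j|)². -/
open MeasureTheory Matrix Finset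

/-- Soft thresholding: `SOFT_τ(z) = z·max(1 − τ/|z|, 0)`. -/
noncomputable def soft (τ z : ℝ) : ℝ := z * max (1 - τ / |z|) 0


lemma soft_sub_bounds {τ t ξ : ℝ} (hτ : 0 < τ) (hξ : |ξ| ≤ τ/2) :
    min τ |t| / 2 ≤ |soft τ (t+ξ) - t| ∧ |soft τ (t+ξ) - t| ≤ 3 * min τ |t| := by
  set x := t + ξ with hxdef
  have hm0 : 0 ≤ min τ |t| := le_min hτ.le (abs_nonneg _)
  have htx : |t| ≤ |x| + |ξ| := by
    have : t = x - ξ := by rw [hxdef]; ring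
    rw [this]; exact abs_sub _ _
  have hxt : |x| ≤ |t| + |ξ| := by
    rw [hxdef]; exact abs_add_le _ _
  by_cases hx : |x| ≤ τ
  · have hs : soft τ x = 0 := by
      rcases eq_or_ne x 0 with h | h
      · simp [soft, h]
      · have hxp : 0 < |x| := abs_pos.mpr h
        have h1 : 1 - τ / |x| ≤ 0 := by
          rw [sub_nonpos, le_div_iff₀ hxp]; linarith
        simp [soft, max_eq_right h1]
    rw [hs]
    have habs : |(0:ℝ) - t| = |t| := by rw [zero_sub, abs_neg]
    rw [habs]
    constructor
    · have := min_le_right τ |t|; linarith [abs_nonneg t]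
    · rcases le_total τ |t| with h | h
      · rw [min_eq_left h]; linarith
      · rw [min_eq_right h]; linarith [abs_nonneg t]
  · push_neg at hx
    have hx0 : x ≠ 0 := by
      intro h; rw [h, abs_zero] at hx; linarith
    have hxp : 0 < |x| := abs_pos.mpr hx0
    have hs : soft τ x = x - τ * (x / |x|) := by
      have h1 : (0:ℝ) ≤ 1 - τ / |x| := by
        rw [sub_nonneg, div_le_one hxp]; linarith
      rw [soft, max_eq_left h1]
      field_simp
    have hsgn : abs (x / |x|) = 1 := by
      rw [abs_div, abs_abs, div_self (ne_of_gt hxp)]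
    have key : soft τ x - t = ξ - τ * (x / |x|) := by
      rw [hs, hxdef]; ring
    rw [key]
    have habs1 : abs (τ * (x / |x|)) = τ := by
      rw [abs_mul, hsgn, mul_one, abs_of_pos hτ]
    have hlow : τ - |ξ| ≤ abs (ξ - τ * (x / |x|)) := by
      have := abs_sub_abs_le_abs_sub (τ * (x / |x|)) ξ
      rw [habs1] at this
      have h2 : abs (τ * (x / |x|) - ξ) = abs (ξ - τ * (x / |x|)) := abs_sub_comm _ _
      linarith [this, h2 ▸ this]
    have hhigh : abs (ξ - τ * (x / |x|)) ≤ |ξ| + τ := by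
      have := abs_sub (ξ) (τ * (x / |x|))
      rw [habs1] at this; exact this
    have hθbig : τ / 2 < |t| := by linarith
    constructor
    · have : min τ |t| ≤ τ := min_le_left _ _
      linarith
    · rcases le_total τ |t| with h | h
      · rw [min_eq_left h]; linarith
      · rw [min_eq_right h]; linarith

lemma sq_bounds {m x : ℝ} (hm : 0 ≤ m) (hlo : m / 2 ≤ |x|) (hhi : |x| ≤ 3 * m) :
    m ^ 2 / 4 ≤ x ^ 2 ∧ x ^ 2 ≤ 9 * m ^ 2 := by
  have h := sq_abs x
  constructor <;> nlinarith [abs_nonneg x]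


/-- Theorem 1, two-sided MSE bound for the NCT estimator, fixed design.
The design `X` is deterministic, the sample covariance `X^⊤X/n` has eigendecomposition
`U·diag(λ̂)·U^⊤` with orthonormal `U ∈ ℝ^{d×r}` and positive decreasing eigenvalues `λ̂`;
`θ_j = λ̂_j^{1/2}(U^⊤β)_j` are the canonical coefficients.  The noise `ε` is sub-Weibull with
parameters `σ, α`.  With `ρ = (2/√n)(log(2r/δ))^{1/α}` and threshold `τ = σρ`, the NCT
estimator `β̂` satisfies, with probability at least `1 − δ`,
`(1/4)·∑ⱼ min(σρ,|θⱼ|)² ≤ MSE(β̂) ≤ 9·∑ⱼ min(σρ,|θⱼ|)²`. -/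
theorem stmt_0
    {Ω : Type*} [MeasurableSpace Ω] (P : Measure Ω) [IsProbabilityMeasure P]
    (n d r : ℕ) (hn : 0 < n) (hr : 0 < r)
    (X : Matrix (Fin n) (Fin d) ℝ) (β : Fin d → ℝ)
    (U : Matrix (Fin d) (Fin r) ℝ) (lam : Fin r → ℝ)
    (hU : Uᵀ * U = 1)
    (hpos : ∀ j, 0 < lam j)
    (hmono : ∀ j k : Fin r, j ≤ k → lam k ≤ lam j)
    (hdecomp : (n : ℝ)⁻¹ • (Xᵀ * X) = U * Matrix.diagonal lam * Uᵀ)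
    (ε : Ω → Fin n → ℝ) (hε : Measurable ε)
    (σ α : ℝ) (hσ : 0 < σ) (hα : α ∈ Set.Ioc (0:ℝ) 2)
    (hnoise : ∀ w : Fin n → ℝ, ∑ i, (w i) ^ 2 = 1 → ∀ t : ℝ, 0 < t →
      P {ω | t ≤ |∑ i, w i * ε ω i|} ≤ ENNReal.ofReal (2 * Real.exp (-((t / σ) ^ α))))
    (δ : ℝ) (hδ : δ ∈ Set.Ioo (0:ℝ) 1) :
    let ρ : ℝ := 2 / Real.sqrt n * Real.log (2 * r / δ) ^ (1 / α)
    let θ : Fin r → ℝ := fun j => Real.sqrt (lam j) * (Uᵀ.mulVec β) j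
    let S : ℝ := ∑ j, (min (σ * ρ) |θ j|) ^ 2
    let bhat : Ω → Fin d → ℝ := fun ω => U.mulVec fun j =>
      (Real.sqrt (lam j))⁻¹ * soft (σ * ρ)
        ((Real.sqrt (lam j))⁻¹ * (Uᵀ.mulVec (Xᵀ.mulVec (X.mulVec β + ε ω))) j / n)
    let MSE : (Fin d → ℝ) → ℝ := fun b =>
      (b - β) ⬝ᵥ (((n : ℝ)⁻¹ • (Xᵀ * X)).mulVec (b - β))
    ENNReal.ofReal (1 - δ) ≤
      P {ω | (1 / 4 : ℝ) * S ≤ MSE (bhat ω) ∧ MSE (bhat ω) ≤ 9 * S} := by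
  intro ρ θ S bhat MSE
  obtain ⟨hα0, hα2⟩ := hα
  obtain ⟨hδ0, hδ1⟩ := hδ
  have hn' : (0:ℝ) < n := by exact_mod_cast hn
  have hr' : (0:ℝ) < r := by exact_mod_cast hr
  set L : ℝ := Real.log (2 * r / δ) ^ (1 / α) with hLdef
  have hlogpos : 0 < Real.log (2 * r / δ) := by
    apply Real.log_pos
    rw [lt_div_iff₀ hδ0]
    have h1 : (1:ℝ) ≤ r := by exact_mod_cast hr
    nlinarith
  have hLpos : 0 < L := Real.rpow_pos_of_pos hlogpos _
  have hsqn : 0 < Real.sqrt n := Real.sqrt_pos.mpr hn'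
  have hρdef : ρ = 2 / Real.sqrt n * L := rfl
  have hρpos : 0 < ρ := by rw [hρdef]; positivity
  set τ : ℝ := σ * ρ with hτdef
  have hτpos : 0 < τ := mul_pos hσ hρpos
  have hsl : ∀ j, 0 < Real.sqrt (lam j) := fun j => Real.sqrt_pos.mpr (hpos j)
  have hss : ∀ j, Real.sqrt (lam j) * Real.sqrt (lam j) = lam j :=
    fun j => Real.mul_self_sqrt (hpos j).le
  -- matrix identities
  have hXX : Xᵀ * X = (n:ℝ) • (U * Matrix.diagonal lam * Uᵀ) := by
    rw [← hdecomp, smul_smul, mul_inv_cancel₀ (ne_of_gt hn'), one_smul]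
  have hXU : (X * U)ᵀ * (X * U) = (n:ℝ) • Matrix.diagonal lam := by
    rw [Matrix.transpose_mul, Matrix.mul_assoc, ← Matrix.mul_assoc Xᵀ X U, hXX,
      Matrix.smul_mul, Matrix.mul_smul]
    congr 1
    calc Uᵀ * (U * Matrix.diagonal lam * Uᵀ * U)
        = (Uᵀ * U) * Matrix.diagonal lam * (Uᵀ * U) := by
          simp only [Matrix.mul_assoc]
      _ = Matrix.diagonal lam := by rw [hU, Matrix.one_mul, Matrix.mul_one]
  have hUtXX : Uᵀ * (Xᵀ * X) = (n:ℝ) • (Matrix.diagonal lam * Uᵀ) := by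
    rw [hXX, Matrix.mul_smul]
    congr 1
    calc Uᵀ * (U * Matrix.diagonal lam * Uᵀ)
        = (Uᵀ * U) * Matrix.diagonal lam * Uᵀ := by simp only [Matrix.mul_assoc]
      _ = Matrix.diagonal lam * Uᵀ := by rw [hU, Matrix.one_mul]
  -- weights
  set c : Fin r → ℝ := fun j => Real.sqrt ((n:ℝ) * lam j) with hcdef
  have hcpos : ∀ j, 0 < c j := fun j => Real.sqrt_pos.mpr (mul_pos hn' (hpos j))
  have hcss : ∀ j, c j * c j = (n:ℝ) * lam j :=
    fun j => Real.mul_self_sqrt (mul_pos hn' (hpos j)).le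
  have hcsplit : ∀ j, c j = Real.sqrt n * Real.sqrt (lam j) :=
    fun j => Real.sqrt_mul hn'.le _
  set w : Fin r → Fin n → ℝ := fun j i => (X * U) i j / c j with hwdef
  have hXUsq : ∀ j, ∑ i, ((X * U) i j)^2 = (n:ℝ) * lam j := by
    intro j
    have h := congrFun (congrFun hXU j) j
    rw [Matrix.mul_apply] at h
    simp only [Matrix.transpose_apply, Matrix.smul_apply, Matrix.diagonal_apply_eq,
      smul_eq_mul] at h
    calc ∑ i, ((X * U) i j)^2 = ∑ i, (X * U) i j * (X * U) i j := by
          simp [pow_two]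
      _ = (n:ℝ) * lam j := h
  have hwnorm : ∀ j, ∑ i, (w j i)^2 = 1 := by
    intro j
    have : ∑ i, (w j i)^2 = (∑ i, ((X * U) i j)^2) / (c j * c j) := by
      rw [Finset.sum_div]
      refine Finset.sum_congr rfl fun i _ => ?_
      rw [hwdef]
      field_simp
    rw [this, hXUsq, hcss, div_self (ne_of_gt (mul_pos hn' (hpos j)))]
  -- noise terms
  set E : Fin r → Ω → ℝ := fun j ω => ∑ i, (X * U) i j * ε ω i with hEdef
  have hWsum : ∀ j ω, ∑ i, w j i * ε ω i = E j ω / c j := by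
    intro j ω
    rw [hEdef, Finset.sum_div]
    refine Finset.sum_congr rfl fun i _ => ?_
    rw [hwdef]
    ring
  set ξ : Ω → Fin r → ℝ := fun ω j => E j ω / ((n:ℝ) * Real.sqrt (lam j)) with hξdef
  -- the soft argument
  have harg : ∀ ω j,
      (Real.sqrt (lam j))⁻¹ * (Uᵀ.mulVec (Xᵀ.mulVec (X.mulVec β + ε ω))) j / n
        = θ j + ξ ω j := by
    intro ω j
    have h1 : Uᵀ.mulVec (Xᵀ.mulVec (X.mulVec β + ε ω)) j
        = (n:ℝ) * (lam j * Uᵀ.mulVec β j) + E j ω := by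
      have e1 : Xᵀ.mulVec (X.mulVec β + ε ω)
          = (Xᵀ * X).mulVec β + Xᵀ.mulVec (ε ω) := by
        rw [Matrix.mulVec_add, Matrix.mulVec_mulVec]
      rw [e1, Matrix.mulVec_add, Pi.add_apply]
      have e2 : Uᵀ.mulVec ((Xᵀ * X).mulVec β) j = (n:ℝ) * (lam j * Uᵀ.mulVec β j) := by
        rw [Matrix.mulVec_mulVec, hUtXX, Matrix.smul_mulVec, Pi.smul_apply,
          smul_eq_mul, ← Matrix.mulVec_mulVec, Matrix.mulVec_diagonal]
      have e3 : Uᵀ.mulVec (Xᵀ.mulVec (ε ω)) j = E j ω := by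
        rw [Matrix.mulVec_mulVec, ← Matrix.transpose_mul, hEdef]
        simp [Matrix.mulVec, dotProduct, Matrix.transpose_apply]
      rw [e2, e3]
    rw [h1, hξdef]
    have hθj : θ j = Real.sqrt (lam j) * Uᵀ.mulVec β j := rfl
    have h2 := hss j
    have h3 := ne_of_gt (hsl j)
    rw [hθj, ← h2]
    rw [Real.sqrt_mul_self (hsl j).le]
    field_simp
  -- MSE expansion
  have hMSE : ∀ ω, MSE (bhat ω) = ∑ j, (soft τ (θ j + ξ ω j) - θ j)^2 := by
    intro ω
    have hb : bhat ω = U.mulVec fun j =>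
        (Real.sqrt (lam j))⁻¹ * soft τ
          ((Real.sqrt (lam j))⁻¹ * (Uᵀ.mulVec (Xᵀ.mulVec (X.mulVec β + ε ω))) j / n) := rfl
    set v : Fin d → ℝ := bhat ω - β with hvdef
    have hu : Uᵀ.mulVec v = fun j => (soft τ (θ j + ξ ω j) - θ j) / Real.sqrt (lam j) := by
      funext j
      rw [hvdef, Matrix.mulVec_sub, hb, Matrix.mulVec_mulVec, hU, Matrix.one_mulVec,
        Pi.sub_apply]
      rw [harg ω j]
      have hθj : θ j = Real.sqrt (lam j) * Uᵀ.mulVec β j := rfl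
      have h3 := ne_of_gt (hsl j)
      rw [hθj]
      field_simp
    have hMv : MSE (bhat ω) = (Uᵀ.mulVec v) ⬝ᵥ (Matrix.diagonal lam).mulVec (Uᵀ.mulVec v) := by
      show v ⬝ᵥ ((n:ℝ)⁻¹ • (Xᵀ * X)).mulVec v = _
      rw [hdecomp, ← Matrix.mulVec_mulVec, ← Matrix.mulVec_mulVec,
        Matrix.dotProduct_mulVec, ← Matrix.mulVec_transpose]
    rw [hMv, hu]
    rw [dotProduct]
    refine Finset.sum_congr rfl fun j _ => ?_
    rw [Matrix.mulVec_diagonal, ← hss j]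
    rw [Real.sqrt_mul_self (hsl j).le]
    have h3 := ne_of_gt (hsl j)
    field_simp
  -- bad events and union bound
  set bad : Fin r → Set Ω := fun j => {ω | σ * L ≤ |∑ i, w j i * ε ω i|} with hbaddef
  have hbad : ∀ j, P (bad j) ≤ ENNReal.ofReal (δ / r) := by
    intro j
    have h := hnoise (w j) (hwnorm j) (σ * L) (mul_pos hσ hLpos)
    have h2r : (0:ℝ) < 2 * r / δ := div_pos (by nlinarith) hδ0
    have he : 2 * Real.exp (-(σ * L / σ) ^ α) = δ / r := by
      rw [mul_div_cancel_left₀ _ (ne_of_gt hσ), hLdef, ← Real.rpow_mul hlogpos.le,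
        one_div, inv_mul_cancel₀ (ne_of_gt hα0), Real.rpow_one,
        Real.exp_neg, Real.exp_log h2r]
      field_simp
    rw [← he]
    exact h
  -- good event
  set G : Set Ω := {ω | ∀ j, |∑ i, w j i * ε ω i| < σ * L} with hGdef
  have hPGc : P Gᶜ ≤ ENNReal.ofReal δ := by
    have hsub : Gᶜ ⊆ ⋃ j, bad j := by
      intro ω hω
      simp only [hGdef, Set.mem_compl_iff, Set.mem_setOf_eq, not_forall, not_lt] at hω
      obtain ⟨j, hj⟩ := hω
      exact Set.mem_iUnion.mpr ⟨j, hj⟩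
    calc P Gᶜ ≤ P (⋃ j, bad j) := measure_mono hsub
      _ ≤ ∑' j, P (bad j) := measure_iUnion_le _
      _ = ∑ j, P (bad j) := tsum_fintype _
      _ ≤ ∑ _j : Fin r, ENNReal.ofReal (δ / r) := Finset.sum_le_sum fun j _ => hbad j
      _ = (r : ENNReal) * ENNReal.ofReal (δ / r) := by
          rw [Finset.sum_const, Finset.card_univ, Fintype.card_fin, nsmul_eq_mul]
      _ = ENNReal.ofReal δ := by
          rw [← ENNReal.ofReal_natCast r, ← ENNReal.ofReal_mul (by positivity)]
          congr 1
          field_simp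
  -- deterministic bound on the good event
  have hkey : ∀ ω ∈ G, (1 / 4 : ℝ) * S ≤ MSE (bhat ω) ∧ MSE (bhat ω) ≤ 9 * S := by
    intro ω hω
    have hξb : ∀ j, |ξ ω j| ≤ τ / 2 := by
      intro j
      have hj : |∑ i, w j i * ε ω i| < σ * L := hω j
      rw [hWsum j ω] at hj
      have hEj : |E j ω| < σ * L * c j := by
        rw [abs_div, abs_of_pos (hcpos j), div_lt_iff₀ (hcpos j)] at hj
        exact hj
      have hξval : |ξ ω j| = |E j ω| / ((n:ℝ) * Real.sqrt (lam j)) := by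
        rw [hξdef]
        rw [abs_div, abs_of_pos (mul_pos hn' (hsl j))]
      have hτhalf : τ / 2 = σ * L / Real.sqrt n := by
        rw [hτdef, hρdef]
        field_simp
      rw [hξval, hτhalf]
      rw [div_le_div_iff₀ (mul_pos hn' (hsl j)) hsqn]
      have hns : Real.sqrt n * Real.sqrt n = (n:ℝ) := Real.mul_self_sqrt hn'.le
      have h4 : |E j ω| * Real.sqrt n < σ * L * c j * Real.sqrt n :=
        mul_lt_mul_of_pos_right hEj hsqn
      have h5 : σ * L * c j * Real.sqrt n = σ * L * ((n:ℝ) * Real.sqrt (lam j)) := by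
        rw [hcsplit j]
        linear_combination (σ * L * Real.sqrt (lam j)) * hns
      linarith
    rw [hMSE ω]
    have hterm : ∀ j, (min τ |θ j|)^2 / 4 ≤ (soft τ (θ j + ξ ω j) - θ j)^2 ∧
        (soft τ (θ j + ξ ω j) - θ j)^2 ≤ 9 * (min τ |θ j|)^2 := by
      intro j
      obtain ⟨hlo, hhi⟩ := soft_sub_bounds hτpos (hξb j)
      have hm0 : 0 ≤ min τ |θ j| := le_min hτpos.le (abs_nonneg _)
      exact sq_bounds hm0 hlo hhi
    constructor
    · have : (1 / 4 : ℝ) * S = ∑ j, (min τ |θ j|)^2 / 4 := by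
        rw [Finset.mul_sum]
        refine Finset.sum_congr rfl fun j _ => by ring
      rw [this]
      exact Finset.sum_le_sum fun j _ => (hterm j).1
    · have : (9 : ℝ) * S = ∑ j, 9 * (min τ |θ j|)^2 := by
        rw [Finset.mul_sum]
      rw [this]
      exact Finset.sum_le_sum fun j _ => (hterm j).2
  -- conclude
  have hmono2 : G ⊆ {ω | (1 / 4 : ℝ) * S ≤ MSE (bhat ω) ∧ MSE (bhat ω) ≤ 9 * S} :=
    fun ω hω => hkey ω hω
  have h1 : (1 : ENNReal) ≤ P G + ENNReal.ofReal δ := by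
    have h2 : P Set.univ ≤ P G + P Gᶜ := by
      calc P Set.univ = P (G ∪ Gᶜ) := by rw [Set.union_compl_self]
        _ ≤ P G + P Gᶜ := measure_union_le _ _
    rw [measure_univ] at h2
    exact h2.trans (add_le_add le_rfl hPGc)
  calc ENNReal.ofReal (1 - δ) = 1 - ENNReal.ofReal δ := by
        rw [ENNReal.ofReal_sub _ hδ0.le, ENNReal.ofReal_one]
    _ ≤ P G := tsub_le_iff_right.mpr h1
    _ ≤ P {ω | (1 / 4 : ℝ) * S ≤ MSE (bhat ω) ∧ MSE (bhat ω) ≤ 9 * S} :=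
        measure_mono hmono2
end

section
/- Effective-rank bound for the NCT estimator (display (8) of the paper). Assume the sub-Weibull noise assumption with parameters σ > 0 and α ∈ (0,2]. Fix δ ∈ (0,1) and take the threshold τ = σρ with ρ = (2/√n)(log(2r/δ))^{1/α}. Then there is an absolute constant C such that, with probability at least 1 − δ, the NCT estimator β̂ satisfies MSE(β̂) ≤ C · σ · ‖Σ̂‖^{1/2} · ‖β‖₂ · √( r_eff[Σ̂] · (log(2r/δ))^{2/α} / n ), where r_eff[Σ̂] = Tr(Σ̂)/‖Σ̂‖ is the effective rank and ‖·‖ denotes the spectral norm. -/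
open MeasureTheory Matrix Finset

lemma soft_err {τ θ z : ℝ} (hτ : 0 ≤ τ) (h : |z - θ| ≤ τ) :
    (soft τ z - θ)^2 ≤ 4 * (τ * |θ|) := by
  unfold soft
  rcases le_or_gt |z| τ with hz | hz
  · have h0 : z * max (1 - τ / |z|) 0 = 0 := by
      rcases eq_or_ne z 0 with rfl | hz0
      · ring
      · have h1 : 1 ≤ τ / |z| := (one_le_div (abs_pos.2 hz0)).2 hz
        rw [max_eq_right (by linarith), mul_zero]
    rw [h0]
    have hθ : |θ| ≤ 2 * τ := by
      have h2 := abs_sub_abs_le_abs_sub θ z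
      rw [abs_sub_comm] at h2
      linarith
    nlinarith [abs_nonneg θ, sq_abs θ]
  · have hz0 : z ≠ 0 := by
      intro hz0; rw [hz0, abs_zero] at hz; linarith
    have hzpos : 0 < |z| := abs_pos.2 hz0
    have hdiv : τ / |z| ≤ 1 := (div_le_one hzpos).2 hz.le
    have hmax : max (1 - τ / |z|) 0 = 1 - τ / |z| := max_eq_left (by linarith)
    rw [hmax]
    set u : ℝ := z / |z| with hu_def
    have hs : z * (1 - τ / |z|) = z - τ * u := by rw [hu_def]; ring
    rw [hs]
    have hu : |u| = 1 := by
      rw [hu_def, abs_div, abs_abs, div_self hzpos.ne']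
    have h1 : |z - τ * u - θ| ≤ 2 * τ := by
      calc |z - τ * u - θ| = |(z - θ) - τ * u| := by ring_nf
        _ ≤ |z - θ| + |τ * u| := abs_sub _ _
        _ = |z - θ| + τ := by rw [abs_mul, hu, mul_one, abs_of_nonneg hτ]
        _ ≤ 2 * τ := by linarith
    have hsabs : |z - τ * u| = |z| - τ := by
      rw [← hs, abs_mul, abs_of_nonneg (by linarith : (0:ℝ) ≤ 1 - τ / |z|),
        mul_sub, mul_one, mul_div_cancel₀ _ hzpos.ne']
    have hzθ : |z| ≤ |θ| + τ := by
      have h2 := abs_sub_abs_le_abs_sub z θ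
      linarith
    have h2 : |z - τ * u - θ| ≤ 2 * |θ| := by
      calc |z - τ * u - θ| ≤ |z - τ * u| + |θ| := abs_sub _ _
        _ = |z| - τ + |θ| := by rw [hsabs]
        _ ≤ 2 * |θ| := by linarith
    have habs := abs_nonneg (z - τ * u - θ)
    nlinarith [sq_abs (z - τ * u - θ)]

set_option maxHeartbeats 1000000 in
/-- effective-rank bound, display (8): there is an absolute constant `C` such
that for any fixed design linear model with sub-Weibull noise, the NCT estimator with
threshold `τ = σρ`, `ρ = (2/√n)(log(2r/δ))^{1/α}`, satisfies with probability `≥ 1 − δ`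
`MSE(β̂) ≤ C σ ‖Σ̂‖^{1/2} ‖β‖₂ √( r_eff[Σ̂] (log(2r/δ))^{2/α} / n )`, where
`r_eff[Σ̂] = Tr(Σ̂)/‖Σ̂‖` and `‖Σ̂‖ = λ̂₁` is the spectral norm. -/
theorem stmt_2 :
    ∃ C : ℝ, 0 < C ∧
      ∀ (Ω : Type) (_ : MeasurableSpace Ω) (P : Measure Ω) (_ : IsProbabilityMeasure P)
        (n d r : ℕ) (_hn : 0 < n) (hr : 0 < r)
        (X : Matrix (Fin n) (Fin d) ℝ) (β : Fin d → ℝ)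
        (U : Matrix (Fin d) (Fin r) ℝ) (lam : Fin r → ℝ),
        Uᵀ * U = 1 →
        (∀ j, 0 < lam j) →
        (∀ j k : Fin r, j ≤ k → lam k ≤ lam j) →
        (n : ℝ)⁻¹ • (Xᵀ * X) = U * Matrix.diagonal lam * Uᵀ →
        ∀ (ε : Ω → Fin n → ℝ), Measurable ε →
        ∀ (σ α : ℝ), 0 < σ → α ∈ Set.Ioc (0:ℝ) 2 →
        (∀ w : Fin n → ℝ, ∑ i, (w i) ^ 2 = 1 → ∀ t : ℝ, 0 < t →
          P {ω | t ≤ |∑ i, w i * ε ω i|} ≤ ENNReal.ofReal (2 * Real.exp (-((t / σ) ^ α)))) →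
        ∀ δ : ℝ, δ ∈ Set.Ioo (0:ℝ) 1 →
        (let ρ : ℝ := 2 / Real.sqrt n * Real.log (2 * r / δ) ^ (1 / α)
         let bhat : Ω → Fin d → ℝ := fun ω => U.mulVec fun j =>
           (Real.sqrt (lam j))⁻¹ * soft (σ * ρ)
             ((Real.sqrt (lam j))⁻¹ * (Uᵀ.mulVec (Xᵀ.mulVec (X.mulVec β + ε ω))) j / n)
         let MSE : (Fin d → ℝ) → ℝ := fun b =>
           (b - β) ⬝ᵥ (((n : ℝ)⁻¹ • (Xᵀ * X)).mulVec (b - β))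
         let reff : ℝ := Matrix.trace ((n : ℝ)⁻¹ • (Xᵀ * X)) / lam ⟨0, hr⟩
         ENNReal.ofReal (1 - δ) ≤
           P {ω | MSE (bhat ω) ≤
             C * σ * Real.sqrt (lam ⟨0, hr⟩) * Real.sqrt (∑ i, (β i) ^ 2) *
               Real.sqrt (reff * Real.log (2 * r / δ) ^ (2 / α) / n)}) := by
  refine ⟨8, by norm_num, ?_⟩
  intro Ω _i P _ip n d r _hn hr X β U lam hU hlam _hmono hS ε hε σ α hσ hα htail δ hδ
  intro ρ bhat MSE reff
  -- basic positivity
  obtain ⟨hα0, hα2⟩ := hα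
  obtain ⟨hδ0, hδ1⟩ := hδ
  have hn' : (0:ℝ) < n := by exact_mod_cast _hn
  have hr1 : (1:ℝ) ≤ r := by exact_mod_cast hr
  have hsn : 0 < Real.sqrt n := Real.sqrt_pos.2 hn'
  set L : ℝ := Real.log (2 * r / δ) with hL_def
  have hrδ : (1:ℝ) < 2 * r / δ := by
    rw [lt_div_iff₀ hδ0]; nlinarith
  have hL : 0 < L := Real.log_pos hrδ
  have hLα : 0 < L ^ (1/α) := Real.rpow_pos_of_pos hL _
  have hρ : 0 < ρ := by
    have : ρ = 2 / Real.sqrt n * L ^ (1/α) := rfl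
    rw [this]; positivity
  have hτ : 0 < σ * ρ := by positivity
  have hS' : Xᵀ * X = (n:ℝ) • (U * Matrix.diagonal lam * Uᵀ) := by
    rw [← hS, smul_smul, mul_inv_cancel₀ hn'.ne', one_smul]
  -- canonical quantities
  set b : Fin r → ℝ := Uᵀ.mulVec β with hb_def
  set θ : Fin r → ℝ := fun j => Real.sqrt (lam j) * b j with hθ_def
  set E : Ω → Fin r → ℝ := fun ω => (X * U)ᵀ.mulVec (ε ω) with hE_def
  have hUc : ∀ v : Fin r → ℝ, Uᵀ.mulVec (U.mulVec v) = v := by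
    intro v; rw [Matrix.mulVec_mulVec, hU, Matrix.one_mulVec]
  -- decomposition of the statistic
  have hmulid : Uᵀ * (Xᵀ * X) = (n:ℝ) • (Matrix.diagonal lam * Uᵀ) := by
    rw [hS', Matrix.mul_smul]
    congr 1
    rw [← Matrix.mul_assoc, ← Matrix.mul_assoc, hU, Matrix.one_mul]
  have hg : ∀ ω, Uᵀ.mulVec (Xᵀ.mulVec (X.mulVec β + ε ω)) =
      fun j => (n:ℝ) * (lam j * b j) + E ω j := by
    intro ω
    rw [Matrix.mulVec_add, Matrix.mulVec_add]
    have h2 : Uᵀ.mulVec (Xᵀ.mulVec (X.mulVec β)) = fun j => (n:ℝ) * (lam j * b j) := by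
      rw [Matrix.mulVec_mulVec, Matrix.mulVec_mulVec, Matrix.mul_assoc, hmulid,
        Matrix.smul_mulVec]
      funext j
      have hdu : ((Matrix.diagonal lam * Uᵀ).mulVec β) j = lam j * b j := by
        rw [← Matrix.mulVec_mulVec, Matrix.mulVec_diagonal, hb_def]
      simp only [Pi.smul_apply, smul_eq_mul, hdu]
    have h3 : Uᵀ.mulVec (Xᵀ.mulVec (ε ω)) = E ω := by
      rw [hE_def, Matrix.mulVec_mulVec, Matrix.transpose_mul]
    rw [h3, h2]
    rfl
  -- MSE identity
  have hMSE : ∀ v : Fin r → ℝ,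
      (U.mulVec v - β) ⬝ᵥ (((n : ℝ)⁻¹ • (Xᵀ * X)).mulVec (U.mulVec v - β)) =
        ∑ j, lam j * (v j - b j)^2 := by
    intro v
    rw [hS]
    have h1 : (U * Matrix.diagonal lam * Uᵀ).mulVec (U.mulVec v - β)
        = U.mulVec ((Matrix.diagonal lam).mulVec (Uᵀ.mulVec (U.mulVec v - β))) := by
      rw [Matrix.mulVec_mulVec, Matrix.mulVec_mulVec, Matrix.mul_assoc]
    rw [h1, Matrix.dotProduct_mulVec, ← Matrix.mulVec_transpose]
    have h2 : Uᵀ.mulVec (U.mulVec v - β) = v - b := by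
      rw [Matrix.mulVec_sub, hUc, hb_def]
    rw [h2]
    simp only [dotProduct, Matrix.mulVec_diagonal, Pi.sub_apply]
    exact Finset.sum_congr rfl fun j _ => by ring
  -- column norms
  have hmid : U * Matrix.diagonal lam * Uᵀ * U = U * Matrix.diagonal lam := by
    rw [Matrix.mul_assoc (U * Matrix.diagonal lam) Uᵀ U, hU, Matrix.mul_one]
  have hcolM : (X * U)ᵀ * (X * U) = (n:ℝ) • Matrix.diagonal lam := by
    rw [Matrix.transpose_mul, Matrix.mul_assoc, ← Matrix.mul_assoc Xᵀ X U, hS',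
      Matrix.smul_mul, hmid, Matrix.mul_smul, ← Matrix.mul_assoc, hU, Matrix.one_mul]
  have hcol : ∀ j, ∑ i, ((X * U) i j)^2 = n * lam j := by
    intro j
    have h := congrFun (congrFun hcolM j) j
    simp only [Matrix.mul_apply, Matrix.transpose_apply, Matrix.smul_apply,
      Matrix.diagonal_apply_eq, smul_eq_mul] at h
    rw [← h]
    exact Finset.sum_congr rfl fun i _ => by rw [Matrix.mul_apply]; ring
  -- projection bound
  have hproj : ∑ j, (b j)^2 ≤ ∑ i, (β i)^2 := by
    have hS0 : (0:ℝ) ≤ ∑ j, (b j)^2 := Finset.sum_nonneg fun j _ => sq_nonneg _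
    have hB0 : (0:ℝ) ≤ ∑ i, (β i)^2 := Finset.sum_nonneg fun i _ => sq_nonneg _
    have h1 : ∑ j, (b j)^2 = β ⬝ᵥ U.mulVec b := by
      have e1 : ∑ j, (b j)^2 = b ⬝ᵥ b := by simp [dotProduct, pow_two]
      rw [e1]
      nth_rewrite 1 [hb_def]
      rw [Matrix.mulVec_transpose, ← Matrix.dotProduct_mulVec]
    have hUb : ∑ i, (U.mulVec b i)^2 = ∑ j, (b j)^2 := by
      have e1 : ∑ i, (U.mulVec b i)^2 = (U.mulVec b) ⬝ᵥ (U.mulVec b) := by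
        simp [dotProduct, pow_two]
      rw [e1, Matrix.dotProduct_mulVec, ← Matrix.mulVec_transpose, hUc]
      simp [dotProduct, pow_two]
    have h2 : (β ⬝ᵥ U.mulVec b)^2 ≤ (∑ i, (β i)^2) * (∑ j, (b j)^2) := by
      calc (β ⬝ᵥ U.mulVec b)^2 = (∑ i, β i * U.mulVec b i)^2 := rfl
        _ ≤ (∑ i, (β i)^2) * (∑ i, (U.mulVec b i)^2) :=
            Finset.sum_mul_sq_le_sq_mul_sq univ _ _
        _ = (∑ i, (β i)^2) * (∑ j, (b j)^2) := by rw [hUb]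
    have h3 : (∑ j, (b j)^2) * (∑ j, (b j)^2) ≤ (∑ i, (β i)^2) * (∑ j, (b j)^2) := by
      nlinarith [h1, h2]
    rcases hS0.eq_or_lt with hS0' | hS0'
    · linarith
    · exact le_of_mul_le_mul_right h3 hS0'
  -- trace
  set T : ℝ := ∑ j, lam j with hT_def
  have hT0 : 0 < T := Finset.sum_pos (fun j _ => hlam j) ⟨⟨0,hr⟩, mem_univ _⟩
  have htr : Matrix.trace ((n : ℝ)⁻¹ • (Xᵀ * X)) = T := by
    rw [hS, Matrix.trace_mul_cycle, hU, Matrix.one_mul, Matrix.trace_diagonal]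
  -- Cauchy-Schwarz
  have hCS : ∑ j, |θ j| ≤ Real.sqrt T * Real.sqrt (∑ i, (β i)^2) := by
    have h1 : ∀ j, |θ j| = Real.sqrt (lam j) * |b j| := by
      intro j
      simp only [hθ_def]
      rw [abs_mul, abs_of_nonneg (Real.sqrt_nonneg _)]
    have h3 : (∑ j, Real.sqrt (lam j) * |b j|)^2 ≤ T * ∑ i, (β i)^2 := by
      calc (∑ j, Real.sqrt (lam j) * |b j|)^2
          ≤ (∑ j, Real.sqrt (lam j)^2) * (∑ j, |b j|^2) :=
            Finset.sum_mul_sq_le_sq_mul_sq univ _ _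
        _ = T * ∑ j, (b j)^2 := by
            congr 1
            · exact Finset.sum_congr rfl fun j _ => Real.sq_sqrt (hlam j).le
            · exact Finset.sum_congr rfl fun j _ => sq_abs _
        _ ≤ T * ∑ i, (β i)^2 := mul_le_mul_of_nonneg_left hproj hT0.le
    have h4 : ∑ j, |θ j| = ∑ j, Real.sqrt (lam j) * |b j| :=
      Finset.sum_congr rfl fun j _ => h1 j
    have h5 : (0:ℝ) ≤ ∑ j, Real.sqrt (lam j) * |b j| :=
      Finset.sum_nonneg fun j _ => by positivity
    rw [h4, ← Real.sqrt_mul hT0.le]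
    calc ∑ j, Real.sqrt (lam j) * |b j|
        = Real.sqrt ((∑ j, Real.sqrt (lam j) * |b j|)^2) := (Real.sqrt_sq h5).symm
      _ ≤ Real.sqrt (T * ∑ i, (β i)^2) := Real.sqrt_le_sqrt h3
  -- the bad events
  have hρ_eq : ρ = 2 / Real.sqrt n * L ^ (1/α) := rfl
  set t : ℝ := σ * ρ * Real.sqrt n with ht_def
  have ht : 0 < t := by positivity
  set w : Fin r → Fin n → ℝ := fun j i => (X * U) i j / Real.sqrt (n * lam j) with hw_def
  have hnl : ∀ j, (0:ℝ) < n * lam j := fun j => mul_pos hn' (hlam j)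
  have hw_unit : ∀ j, ∑ i, (w j i)^2 = 1 := by
    intro j
    have h1 : ∑ i, (w j i)^2 = (∑ i, ((X*U) i j)^2) / (n * lam j) := by
      rw [Finset.sum_div]
      refine Finset.sum_congr rfl fun i _ => ?_
      simp only [hw_def]
      rw [div_pow, Real.sq_sqrt (hnl j).le]
    rw [h1, hcol j, div_self (hnl j).ne']
  set Bad : Fin r → Set Ω := fun j => {ω | t ≤ |∑ i, w j i * ε ω i|} with hBad_def
  -- tail bound
  have htσ : t / σ = 2 * L ^ (1/α) := by
    rw [ht_def, hρ_eq]
    field_simp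
  have hexp : (t / σ) ^ α = 2 ^ α * L := by
    rw [htσ, Real.mul_rpow (by norm_num) (Real.rpow_nonneg hL.le _)]
    congr 1
    rw [← Real.rpow_mul hL.le, one_div, inv_mul_cancel₀ hα0.ne', Real.rpow_one]
  have hone : (1:ℝ) ≤ 2 ^ α := by
    calc (1:ℝ) = 2 ^ (0:ℝ) := (Real.rpow_zero 2).symm
      _ ≤ 2 ^ α := Real.rpow_le_rpow_of_exponent_le (by norm_num) hα0.le
  have hexp_le : 2 * Real.exp (-((t / σ) ^ α)) ≤ δ / r := by
    have h1 : L ≤ (t/σ)^α := by rw [hexp]; nlinarith [hL.le]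
    have h2 : Real.exp (-((t/σ)^α)) ≤ Real.exp (-L) := Real.exp_le_exp.2 (by linarith)
    have h3 : Real.exp (-L) = δ / (2 * r) := by
      rw [hL_def, Real.exp_neg, Real.exp_log (by positivity), inv_div]
    have h4 : Real.exp (-((t/σ)^α)) ≤ δ / (2*r) := h3 ▸ h2
    have h5 : 2 * (δ / (2*r)) = δ / r := by
      field_simp
    linarith
  have hPBad : ∀ j, P (Bad j) ≤ ENNReal.ofReal (δ / r) := by
    intro j
    calc P (Bad j) ≤ ENNReal.ofReal (2 * Real.exp (-((t / σ) ^ α))) :=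
          htail (w j) (hw_unit j) t ht
      _ ≤ ENNReal.ofReal (δ / r) := ENNReal.ofReal_le_ofReal hexp_le
  have hPU : P (⋃ j, Bad j) ≤ ENNReal.ofReal δ := by
    calc P (⋃ j, Bad j) ≤ ∑' j, P (Bad j) := measure_iUnion_le _
      _ ≤ ∑' (x : Fin r), ENNReal.ofReal (δ / r) := ENNReal.tsum_le_tsum hPBad
      _ = (r : ENNReal) * ENNReal.ofReal (δ / r) := by
          rw [tsum_fintype]
          simp [Finset.sum_const, Finset.card_univ, nsmul_eq_mul]
      _ = ENNReal.ofReal δ := by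
          rw [← ENNReal.ofReal_natCast r, ← ENNReal.ofReal_mul (by positivity)]
          congr 1
          field_simp
  -- entries of E
  have hE_entry : ∀ ω j, E ω j = ∑ i, (X*U) i j * ε ω i := by
    intro ω j
    simp only [hE_def]
    simp [Matrix.mulVec, dotProduct, Matrix.transpose_apply]
  -- the good-event inclusion
  have hsub : (⋃ j, Bad j)ᶜ ⊆ {ω | MSE (bhat ω) ≤
      8 * σ * Real.sqrt (lam ⟨0, hr⟩) * Real.sqrt (∑ i, (β i) ^ 2) *
        Real.sqrt (reff * L ^ (2 / α) / n)} := by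
    intro ω hω
    simp only [Set.mem_compl_iff, Set.mem_iUnion, not_exists, hBad_def,
      Set.mem_setOf_eq, not_le] at hω
    have hξ : ∀ j, |(Real.sqrt (lam j))⁻¹ * E ω j / n| ≤ σ * ρ := by
      intro j
      have hsl : 0 < Real.sqrt (lam j) := Real.sqrt_pos.2 (hlam j)
      have hwsum : ∑ i, w j i * ε ω i = E ω j / Real.sqrt (n * lam j) := by
        rw [hE_entry ω j, Finset.sum_div]
        refine Finset.sum_congr rfl fun i _ => ?_
        simp only [hw_def]
        ring
      have h1 : |E ω j| < t * Real.sqrt (n * lam j) := by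
        have h0 := hω j
        rw [hwsum, abs_div, abs_of_nonneg (Real.sqrt_nonneg _)] at h0
        exact (div_lt_iff₀ (Real.sqrt_pos.2 (hnl j))).1 h0
      have hnn : Real.sqrt n * Real.sqrt n = (n:ℝ) := Real.mul_self_sqrt hn'.le
      have h2 : t * Real.sqrt (n * lam j) = σ * ρ * ((n:ℝ) * Real.sqrt (lam j)) := by
        calc t * Real.sqrt (n * lam j)
            = σ * ρ * Real.sqrt n * (Real.sqrt n * Real.sqrt (lam j)) := by
              rw [ht_def, Real.sqrt_mul hn'.le]
          _ = σ * ρ * ((Real.sqrt n * Real.sqrt n) * Real.sqrt (lam j)) := by ring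
          _ = σ * ρ * ((n:ℝ) * Real.sqrt (lam j)) := by rw [hnn]
      have hinv : (Real.sqrt (lam j))⁻¹ * Real.sqrt (lam j) = 1 := inv_mul_cancel₀ hsl.ne'
      have h3 : |(Real.sqrt (lam j))⁻¹ * E ω j / n| = |E ω j| / ((n:ℝ) * Real.sqrt (lam j)) := by
        rw [abs_div, abs_mul, abs_inv, abs_of_nonneg (Real.sqrt_nonneg _),
          abs_of_nonneg hn'.le, div_eq_div_iff hn'.ne' (by positivity : ((n:ℝ) * Real.sqrt (lam j)) ≠ 0)]
        linear_combination (|E ω j| * (n:ℝ)) * hinv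
      rw [h3, div_le_iff₀ (by positivity)]
      nlinarith [h1, h2]
    -- compute the value of the statistic
    have hzval : ∀ j, (Real.sqrt (lam j))⁻¹ *
        (Uᵀ.mulVec (Xᵀ.mulVec (X.mulVec β + ε ω))) j / n
          = θ j + (Real.sqrt (lam j))⁻¹ * E ω j / n := by
      intro j
      rw [hg ω]
      have hls : Real.sqrt (lam j) * Real.sqrt (lam j) = lam j := Real.mul_self_sqrt (hlam j).le
      have hsne : Real.sqrt (lam j) ≠ 0 := (Real.sqrt_pos.2 (hlam j)).ne'
      have h5 : (Real.sqrt (lam j))⁻¹ * lam j = Real.sqrt (lam j) := by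
        calc (Real.sqrt (lam j))⁻¹ * lam j
            = (Real.sqrt (lam j))⁻¹ * (Real.sqrt (lam j) * Real.sqrt (lam j)) := by rw [hls]
          _ = Real.sqrt (lam j) := inv_mul_cancel_left₀ hsne _
      show (Real.sqrt (lam j))⁻¹ * ((n:ℝ) * (lam j * b j) + E ω j) / n
          = θ j + (Real.sqrt (lam j))⁻¹ * E ω j / n
      calc (Real.sqrt (lam j))⁻¹ * ((n:ℝ) * (lam j * b j) + E ω j) / n
          = (Real.sqrt (lam j))⁻¹ * ((n:ℝ) * (lam j * b j)) / n
              + (Real.sqrt (lam j))⁻¹ * E ω j / n := by rw [mul_add, add_div]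
        _ = (Real.sqrt (lam j))⁻¹ * lam j * b j
              + (Real.sqrt (lam j))⁻¹ * E ω j / n := by
            congr 1
            rw [mul_div_assoc, mul_div_cancel_left₀ _ hn'.ne', ← mul_assoc]
        _ = θ j + (Real.sqrt (lam j))⁻¹ * E ω j / n := by rw [h5]
    have key : ∀ j s, lam j * ((Real.sqrt (lam j))⁻¹ * s - b j)^2 = (s - θ j)^2 := by
      intro j s
      have hls : Real.sqrt (lam j) * Real.sqrt (lam j) = lam j := Real.mul_self_sqrt (hlam j).le
      have hsne : Real.sqrt (lam j) ≠ 0 := (Real.sqrt_pos.2 (hlam j)).ne'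
      have h7 : Real.sqrt (lam j) * ((Real.sqrt (lam j))⁻¹ * s - b j) = s - θ j := by
        simp only [hθ_def]
        rw [mul_sub, mul_inv_cancel_left₀ hsne]
      calc lam j * ((Real.sqrt (lam j))⁻¹ * s - b j)^2
          = (Real.sqrt (lam j) * Real.sqrt (lam j)) * ((Real.sqrt (lam j))⁻¹ * s - b j)^2 := by
            rw [hls]
        _ = (Real.sqrt (lam j) * ((Real.sqrt (lam j))⁻¹ * s - b j))^2 := by ring
        _ = (s - θ j)^2 := by rw [h7]
    have h6 : MSE (bhat ω) = ∑ j, lam j * ((Real.sqrt (lam j))⁻¹ *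
        soft (σ * ρ) ((Real.sqrt (lam j))⁻¹ *
          (Uᵀ.mulVec (Xᵀ.mulVec (X.mulVec β + ε ω))) j / n) - b j)^2 :=
      hMSE _
    show MSE (bhat ω) ≤ _
    calc MSE (bhat ω)
        = ∑ j, (soft (σ * ρ) (θ j + (Real.sqrt (lam j))⁻¹ * E ω j / n) - θ j)^2 := by
          rw [h6]
          exact Finset.sum_congr rfl fun j _ => by rw [key, hzval]
      _ ≤ ∑ j, 4 * ((σ * ρ) * |θ j|) := by
          refine Finset.sum_le_sum fun j _ => ?_
          refine soft_err hτ.le ?_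
          rw [add_sub_cancel_left]
          exact hξ j
      _ = 4 * (σ * ρ) * ∑ j, |θ j| := by
          rw [Finset.mul_sum]
          exact Finset.sum_congr rfl fun j _ => by ring
      _ ≤ 4 * (σ * ρ) * (Real.sqrt T * Real.sqrt (∑ i, (β i)^2)) :=
          mul_le_mul_of_nonneg_left hCS (by positivity)
      _ = 8 * σ * Real.sqrt (lam ⟨0, hr⟩) * Real.sqrt (∑ i, (β i) ^ 2) *
            Real.sqrt (reff * L ^ (2 / α) / n) := by
          have hlam0 := hlam ⟨0, hr⟩
          have e0 : reff = T / lam ⟨0, hr⟩ := by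
            show Matrix.trace _ / _ = _
            rw [htr]
          have e1 : Real.sqrt (L ^ ((2:ℝ)/α)) = L ^ ((1:ℝ)/α) := by
            have e1' : L ^ ((2:ℝ)/α) = (L ^ ((1:ℝ)/α))^(2:ℕ) := by
              rw [← Real.rpow_natCast (L ^ ((1:ℝ)/α)) 2, ← Real.rpow_mul hL.le]
              congr 1
              push_cast
              ring
            rw [e1', Real.sqrt_sq (Real.rpow_nonneg hL.le _)]
          have e2 : Real.sqrt (T / lam ⟨0, hr⟩ * L ^ ((2:ℝ)/α) / n)
              = Real.sqrt (T / lam ⟨0, hr⟩) * L ^ ((1:ℝ)/α) / Real.sqrt n := by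
            rw [Real.sqrt_div (by positivity) (n:ℝ), Real.sqrt_mul (by positivity), e1]
          have e3 : Real.sqrt (lam ⟨0, hr⟩) * Real.sqrt (T / lam ⟨0, hr⟩) = Real.sqrt T := by
            rw [← Real.sqrt_mul hlam0.le, mul_comm, div_mul_cancel₀ _ hlam0.ne']
          rw [e0, e2, hρ_eq, ← e3]
          ring
  -- conclude
  have hcompl : ENNReal.ofReal (1 - δ) ≤ P ((⋃ j, Bad j)ᶜ) := by
    have h1 : (1:ENNReal) ≤ P (⋃ j, Bad j) + P ((⋃ j, Bad j)ᶜ) := by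
      rw [← measure_univ (μ := P)]
      refine le_trans (measure_mono ?_) (measure_union_le _ _)
      rw [Set.union_compl_self]
    have h2 : ENNReal.ofReal (1 - δ) + ENNReal.ofReal δ = 1 := by
      rw [← ENNReal.ofReal_add (by linarith) hδ0.le]
      norm_num
    have h3 : ENNReal.ofReal (1 - δ) + ENNReal.ofReal δ
        ≤ P ((⋃ j, Bad j)ᶜ) + ENNReal.ofReal δ := by
      rw [h2]
      calc (1:ENNReal) ≤ P (⋃ j, Bad j) + P ((⋃ j, Bad j)ᶜ) := h1
        _ ≤ ENNReal.ofReal δ + P ((⋃ j, Bad j)ᶜ) := add_le_add_left hPU _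
        _ = P ((⋃ j, Bad j)ᶜ) + ENNReal.ofReal δ := add_comm _ _
    exact (ENNReal.add_le_add_iff_right ENNReal.ofReal_ne_top).1 h3
  exact le_trans hcompl (measure_mono hsub)
end

section
/- Proposition 1(iii) (tightness under polynomial decay). Let θ ∈ ℝ^r be nonzero, σ > 0, ρ > 0, and let |θ_{(1)}| ≥ |θ_{(2)}| ≥ … ≥ |θ_{(r)}| be the absolute values of its components in descending order. Suppose there exist a > 0 and constants 0 < c₁ ≤ c₂ such that c₁·j^{−a} ≤ |θ_{(j)}|/|θ_{(1)}| ≤ c₂·j^{−a} for all j ∈ [r]. Then there exists a constant c > 0 depending only on a, c₁, c₂ such that: if a ≥ 1/2, then ∑_{j=1}^r min(σρ, |θ_j|)² ≥ (c/log(e·r)) · inf_{q ∈ [0,2]} { ‖θ‖_q^q · (σρ)^{2−q} }; and if a < 1/2, then ∑_{j=1}^r min(σρ, |θ_j|)² ≥ c · inf_{q ∈ [0,2]} { ‖θ‖_q^q · (σρ)^{2−q} }. -/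
open Finset

/-- The ℓ_q "norm to the q-th power" with the convention `0⁰ = 0`. -/
noncomputable def lqq {r : ℕ} (q : ℝ) (v : Fin r → ℝ) : ℝ :=
  ∑ j, if v j = 0 then 0 else |v j| ^ q

lemma lqq_eq_sum {r : ℕ} {v : Fin r → ℝ} (hv : ∀ i, v i ≠ 0) (q : ℝ) :
    lqq q v = ∑ i, |v i| ^ q := by
  unfold lqq
  exact Finset.sum_congr rfl fun i _ => if_neg (hv i)

lemma lqq_nonneg {r : ℕ} (q : ℝ) (v : Fin r → ℝ) : 0 ≤ lqq q v := by
  apply Finset.sum_nonneg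
  intro i _
  split
  · exact le_refl 0
  · exact Real.rpow_nonneg (abs_nonneg _) q

lemma core {r : ℕ} (hr : 0 < r) (θ : Fin r → ℝ) (T : ℝ) (hT : 0 < T)
    (hθ : ∀ i, θ i ≠ 0) {κ : ℝ} (hκ0 : 0 ≤ κ) (hκ1 : κ ≤ 1)
    (hmid : (∃ j, T ≤ |θ j|) → (∃ j, |θ j| < T) →
      κ * sInf ((fun q => lqq q θ * T ^ (2 - q)) '' Set.Icc (0:ℝ) 2) ≤ ∑ j, (min T |θ j|) ^ 2) :
    κ * sInf ((fun q => lqq q θ * T ^ (2 - q)) '' Set.Icc (0:ℝ) 2) ≤ ∑ j, (min T |θ j|) ^ 2 := by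
  set S := (fun q => lqq q θ * T ^ (2 - q)) '' Set.Icc (0:ℝ) 2 with hS
  have hSnonneg : ∀ x ∈ S, 0 ≤ x := by
    rintro x ⟨q, hq, rfl⟩
    exact mul_nonneg (lqq_nonneg q θ) (Real.rpow_nonneg hT.le _)
  have hbdd : BddBelow S := ⟨0, fun x hx => hSnonneg x hx⟩
  have hinf0 : 0 ≤ sInf S := Real.sInf_nonneg hSnonneg
  have hinfle : ∀ q : ℝ, q ∈ Set.Icc (0:ℝ) 2 → sInf S ≤ lqq q θ * T ^ (2 - q) :=
    fun q hq => csInf_le hbdd ⟨q, hq, rfl⟩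
  have hκinf : κ * sInf S ≤ sInf S := by
    nlinarith
  by_cases hall : ∀ j, T ≤ |θ j|
  · have hP0 : lqq 0 θ * T ^ ((2:ℝ) - 0) = ∑ j, (min T |θ j|) ^ 2 := by
      have h1 : lqq 0 θ = (r : ℝ) := by
        unfold lqq
        rw [Finset.sum_congr rfl fun i _ => if_neg (hθ i)]
        simp [Real.rpow_zero]
      have h2 : ∀ j, min T |θ j| = T := fun j => min_eq_left (hall j)
      rw [h1]
      rw [Finset.sum_congr rfl fun j _ => by rw [h2 j]]
      rw [Finset.sum_const, Finset.card_univ, Fintype.card_fin]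
      rw [show (2:ℝ) - 0 = (2:ℕ) by norm_num, Real.rpow_natCast]
      simp [nsmul_eq_mul]
    calc κ * sInf S ≤ sInf S := hκinf
      _ ≤ lqq 0 θ * T ^ ((2:ℝ) - 0) := hinfle 0 (by constructor <;> norm_num)
      _ = _ := hP0
  push_neg at hall
  by_cases hnone : ∀ j, |θ j| < T
  · have hP2 : lqq 2 θ * T ^ ((2:ℝ) - 2) = ∑ j, (min T |θ j|) ^ 2 := by
      have h1 : lqq 2 θ = ∑ j, |θ j| ^ (2:ℕ) := by
        rw [lqq_eq_sum hθ]
        exact Finset.sum_congr rfl fun j _ => by rw [← Real.rpow_natCast]; norm_num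
      have h2 : ∀ j, min T |θ j| = |θ j| := fun j => min_eq_right (hnone j).le
      rw [h1, show (2:ℝ) - 2 = 0 by norm_num, Real.rpow_zero, mul_one]
      exact Finset.sum_congr rfl fun j _ => by rw [h2 j]
    calc κ * sInf S ≤ sInf S := hκinf
      _ ≤ lqq 2 θ * T ^ ((2:ℝ) - 2) := hinfle 2 (by constructor <;> norm_num)
      _ = _ := hP2
  push_neg at hnone
  obtain ⟨j₁, hj₁⟩ := hnone
  exact hmid ⟨j₁, hj₁⟩ hall

lemma bern {x s : ℝ} (hx : 0 ≤ x) (hs0 : 0 ≤ s) (hs1 : s ≤ 1) :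
    (1 + x) ^ s ≤ 1 + s * x :=
  rpow_one_add_le_one_add_mul_self (by linarith) hs0 hs1

lemma sum_rpow_le {s : ℝ} (hs0 : 0 < s) (hs1 : s < 1) (m : ℕ) :
    ∑ i ∈ range m, ((i : ℝ) + 1) ^ (-s) ≤ (m : ℝ) ^ (1 - s) / (1 - s) := by
  induction m with
  | zero => simp [Real.zero_rpow (by linarith : (1:ℝ)-s ≠ 0), le_of_lt, div_nonneg, le_refl]
    -- fallback

  | succ n ih =>
    rw [Finset.sum_range_succ]
    have hn1 : (0:ℝ) < (n:ℝ) + 1 := by positivity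
    have key : ((n:ℝ) + 1) ^ (-s) ≤ (((n:ℝ)+1) ^ (1 - s) - (n:ℝ) ^ (1-s)) / (1 - s) := by
      rw [le_div_iff₀ (by linarith)]
      have h2 : (n:ℝ) ^ (1-s) ≤ ((n:ℝ)+1) ^ (1-s) - (1-s) * ((n:ℝ)+1) ^ (-s) := by
        rcases Nat.eq_zero_or_pos n with h | h
        · subst h
          simp only [Nat.cast_zero, zero_add, Real.one_rpow]
          rw [Real.zero_rpow (by linarith)]
          nlinarith
        have hn0 : (0:ℝ) < (n:ℝ) := by exact_mod_cast h
        -- (n+1)^(1-s) - n^(1-s) ≥ (1-s)(n+1)^(-s)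
        -- equivalent: n^(1-s) (n+1)^s ≤ (n+1) - (1-s)
        have hb : ((1:ℝ) + 1/(n:ℝ)) ^ s ≤ 1 + s * (1/(n:ℝ)) :=
          bern (by positivity) hs0.le hs1.le
        have e1 : ((n:ℝ)+1) ^ s = (n:ℝ) ^ s * (1 + 1/(n:ℝ)) ^ s := by
          rw [← Real.mul_rpow hn0.le (by positivity)]
          congr 1; field_simp
        have e2 : (n:ℝ) ^ (1-s) * (n:ℝ) ^ s = (n:ℝ) := by
          rw [← Real.rpow_add hn0]; norm_num
        have e3 : ((n:ℝ)+1) ^ (1-s) * ((n:ℝ)+1) ^ s = (n:ℝ) + 1 := by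
          rw [← Real.rpow_add hn1]; norm_num
        have e4 : ((n:ℝ)+1) ^ (-s) * ((n:ℝ)+1) ^ s = 1 := by
          rw [← Real.rpow_add hn1]; norm_num
        have h5 : (n:ℝ) ^ (1-s) * ((n:ℝ)+1) ^ s ≤ (n:ℝ) + s := by
          calc (n:ℝ) ^ (1-s) * ((n:ℝ)+1) ^ s
              = (n:ℝ) ^ (1-s) * (n:ℝ) ^ s * (1 + 1/(n:ℝ)) ^ s := by rw [e1]; ring
            _ = (n:ℝ) * (1 + 1/(n:ℝ)) ^ s := by rw [e2]
            _ ≤ (n:ℝ) * (1 + s * (1/(n:ℝ))) := by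
                exact mul_le_mul_of_nonneg_left hb hn0.le
            _ = (n:ℝ) + s := by field_simp
        -- multiply target by (n+1)^s > 0
        have hpow : (0:ℝ) < ((n:ℝ)+1) ^ s := Real.rpow_pos_of_pos hn1 s
        nlinarith [h5, e3, e4, hpow]
      linarith
    have cast1 : ((n+1 : ℕ) : ℝ) = (n:ℝ) + 1 := by push_cast; ring
    rw [cast1]
    calc ∑ i ∈ range n, ((i : ℝ) + 1) ^ (-s) + ((n:ℝ) + 1) ^ (-s)
        ≤ (n : ℝ) ^ (1 - s) / (1 - s) + (((n:ℝ)+1) ^ (1 - s) - (n:ℝ) ^ (1-s)) / (1 - s) :=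
          add_le_add ih key
      _ = ((n:ℝ)+1) ^ (1 - s) / (1 - s) := by ring

lemma harm_le (r : ℕ) : ∑ i ∈ range r, ((i : ℝ) + 1) ^ (-(1:ℝ)) ≤ 1 + Real.log r := by
  have := harmonic_le_one_add_log r
  have e : ((harmonic r : ℚ) : ℝ) = ∑ i ∈ range r, ((i : ℝ) + 1) ^ (-(1:ℝ)) := by
    rw [harmonic]
    push_cast
    refine Finset.sum_congr rfl fun i _ => ?_
    rw [Real.rpow_neg_one]
  linarith [e ▸ this]

lemma lower_char {r : ℕ} (F : Finset (Fin r))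
    (hF : ∀ j k : Fin r, j ≤ k → k ∈ F → j ∈ F) (k : Fin r) :
    k ∈ F ↔ k.val < F.card := by
  constructor
  · intro hk
    have : (range (k.val + 1)).card ≤ F.card := by
      apply Finset.card_le_card_of_injOn (fun i => (⟨min i k.val, lt_of_le_of_lt (min_le_right _ _) k.isLt⟩ : Fin r))
      · intro i hi
        apply hF _ k _ hk
        exact min_le_right i k.val
      · intro i hi j hj hij
        simp only [Finset.coe_range, Set.mem_Iio, Nat.lt_succ_iff] at hi hj
        have : min i k.val = min j k.val := congrArg Fin.val hij
        rwa [min_eq_left hi, min_eq_left hj] at this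
    simp only [Finset.card_range] at this; omega
  · intro hk
    by_contra hkF
    have hsub : ∀ j ∈ F, j.val < k.val := by
      intro j hj
      by_contra h
      exact hkF (hF k j (not_lt.mp h) hj)
    have : F.card ≤ (range k.val).card := by
      apply Finset.card_le_card_of_injOn (fun j => j.val)
      · intro j hj; exact Finset.mem_range.mpr (hsub j hj)
      · intro i _ j _ h; exact Fin.ext h
    simp only [Finset.card_range] at this
    omega

lemma sum_lowerset {r m : ℕ} (hm : m ≤ r) (F : Finset (Fin r))
    (hchar : ∀ j : Fin r, j ∈ F ↔ j.val < m) (f : ℕ → ℝ) :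
    ∑ j ∈ F, f j.val = ∑ i ∈ range m, f i := by
  have hFeq : F = univ.filter (fun j : Fin r => j.val < m) := by
    ext j; simp [hchar]
  have h1 : (range r).filter (fun i => i < m) = range m := by
    ext i; simp only [Finset.mem_filter, Finset.mem_range]; omega
  rw [hFeq, Finset.sum_filter, Fin.sum_univ_eq_sum_range (fun i => if i < m then f i else 0) r,
    ← Finset.sum_filter, h1]

-- facts about m = number of coordinates ≥ T
lemma mid_setup {r : ℕ} (hr : 0 < r) (θ : Fin r → ℝ) (T : ℝ)
    (e : Fin r ≃ Fin r)
    (hmono : ∀ j k : Fin r, j ≤ k → |θ (e k)| ≤ |θ (e j)|)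
    (hge : ∃ j, T ≤ |θ (e j)|) (hlt : ∃ j, |θ (e j)| < T) :
    ∃ m : ℕ, 1 ≤ m ∧ m < r ∧
      (∀ j : Fin r, T ≤ |θ (e j)| ↔ j.val < m) ∧
      ((univ.filter fun j : Fin r => T ≤ |θ (e j)|).card = m) := by
  set F := univ.filter fun j : Fin r => T ≤ |θ (e j)| with hF
  have hdown : ∀ j k : Fin r, j ≤ k → k ∈ F → j ∈ F := by
    intro j k hjk hk
    simp only [hF, Finset.mem_filter, Finset.mem_univ, true_and] at hk ⊢
    exact hk.trans (hmono j k hjk)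
  have hchar := lower_char F hdown
  refine ⟨F.card, ?_, ?_, ?_, rfl⟩
  · obtain ⟨j, hj⟩ := hge
    have : j ∈ F := by simp [hF, hj]
    exact Finset.card_pos.mpr ⟨j, this⟩
  · obtain ⟨j₁, hj₁⟩ := hlt
    have : j₁ ∉ F := by
      simp only [hF, Finset.mem_filter, Finset.mem_univ, true_and, not_le]
      exact hj₁
    have h2 := (hchar j₁).not.mp this
    push_neg at h2
    omega
  · intro j
    rw [← hchar j]
    simp [hF]

lemma rhs_lb {r : ℕ} (θ : Fin r → ℝ) (T : ℝ) (hT : 0 < T) (e : Fin r ≃ Fin r) (m : ℕ)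
    (hcard : (univ.filter fun j : Fin r => T ≤ |θ (e j)|).card = m) :
    (m : ℝ) * T ^ 2 ≤ ∑ j, (min T |θ j|) ^ 2 := by
  have h1 : ∑ j, (min T |θ j|) ^ 2 = ∑ j, (min T |θ (e j)|) ^ 2 :=
    (Equiv.sum_comp e fun i => (min T |θ i|) ^ 2).symm
  rw [h1]
  have h2 : ∑ j ∈ univ.filter fun j : Fin r => T ≤ |θ (e j)|, (min T |θ (e j)|) ^ 2
      ≤ ∑ j, (min T |θ (e j)|) ^ 2 := by
    apply Finset.sum_le_sum_of_subset_of_nonneg (Finset.subset_univ _)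
    intro i _ _
    positivity
  refine le_trans (le_of_eq ?_) h2
  rw [Finset.sum_congr rfl (fun j hj => ?_)]
  · rw [Finset.sum_const, hcard, nsmul_eq_mul]
  · simp only [Finset.mem_filter] at hj
    rw [min_eq_left hj.2]

lemma midA (a c₁ c₂ : ℝ) (ha : 0 < a) (hc₁ : 0 < c₁) (hc₁₂ : c₁ ≤ c₂) (ha2 : 1/2 ≤ a)
    {r : ℕ} (hr : 0 < r) (θ : Fin r → ℝ) (T : ℝ) (hT : 0 < T) (e : Fin r ≃ Fin r)
    (hmono : ∀ j k : Fin r, j ≤ k → |θ (e k)| ≤ |θ (e j)|)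
    (hlb : ∀ j : Fin r, c₁ * ((j.val : ℝ) + 1) ^ (-a) * |θ (e ⟨0, hr⟩)| ≤ |θ (e j)|)
    (hub : ∀ j : Fin r, |θ (e j)| ≤ c₂ * ((j.val : ℝ) + 1) ^ (-a) * |θ (e ⟨0, hr⟩)|)
    (hθ : ∀ i, θ i ≠ 0)
    (hge : ∃ j, T ≤ |θ (e j)|) (hlt : ∃ j, |θ (e j)| < T) :
    min 1 ((c₁ / c₂) ^ a⁻¹ / 2) / (1 + Real.log r) *
        sInf ((fun q => lqq q θ * T ^ (2 - q)) '' Set.Icc (0:ℝ) 2) ≤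
      ∑ j, (min T |θ j|) ^ 2 := by
  set b0 := |θ (e ⟨0, hr⟩)| with hb0def
  have hb0 : 0 < b0 := abs_pos.mpr (hθ _)
  obtain ⟨m, hm1, hmr, hchar, hcard⟩ := mid_setup hr θ T e hmono hge hlt
  have hc₂ : 0 < c₂ := lt_of_lt_of_le hc₁ hc₁₂
  -- T lower bound via index m
  have hkT : |θ (e ⟨m, hmr⟩)| < T := by
    have := (hchar ⟨m, hmr⟩).not.mpr (by simp)
    simpa using not_le.mp this
  have hTlb : c₁ * ((m : ℝ) + 1) ^ (-a) * b0 < T := lt_of_le_of_lt (hlb ⟨m, hmr⟩) hkT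
  -- b0 bound
  have hma : (0:ℝ) < ((m:ℝ) + 1) ^ a := Real.rpow_pos_of_pos (by positivity) a
  have hb0ub : b0 ≤ T * ((m : ℝ) + 1) ^ a / c₁ := by
    rw [Real.rpow_neg (by positivity)] at hTlb
    rw [le_div_iff₀ hc₁]
    calc b0 * c₁ = c₁ * (((m:ℝ)+1) ^ a)⁻¹ * b0 * ((m:ℝ)+1) ^ a := by
          field_simp
      _ ≤ T * ((m:ℝ)+1) ^ a := mul_le_mul_of_nonneg_right hTlb.le hma.le
  -- q = a⁻¹
  have hq0 : (0:ℝ) ≤ a⁻¹ := by positivity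
  have hq2 : a⁻¹ ≤ 2 := by
    have h := inv_anti₀ (by norm_num : (0:ℝ) < 1/2) ha2
    simpa using h
  have haq : a * a⁻¹ = 1 := mul_inv_cancel₀ ha.ne'
  -- lqq bound
  have hterm : ∀ j : Fin r, |θ (e j)| ^ a⁻¹ ≤
      c₂ ^ a⁻¹ * b0 ^ a⁻¹ * ((j.val : ℝ) + 1) ^ (-(1:ℝ)) := by
    intro j
    have h1 : |θ (e j)| ^ a⁻¹ ≤ (c₂ * ((j.val:ℝ)+1) ^ (-a) * b0) ^ a⁻¹ :=
      Real.rpow_le_rpow (abs_nonneg _) (hub j) hq0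
    refine h1.trans (le_of_eq ?_)
    rw [Real.mul_rpow (by positivity) hb0.le, Real.mul_rpow hc₂.le (by positivity),
      ← Real.rpow_mul (by positivity : (0:ℝ) ≤ (j.val:ℝ)+1),
      show -a * a⁻¹ = -(1:ℝ) by rw [neg_mul, haq]]
    ring
  have hsum1 : ∑ j : Fin r, ((j.val : ℝ) + 1) ^ (-(1:ℝ)) ≤ 1 + Real.log r := by
    rw [Fin.sum_univ_eq_sum_range (fun i => ((i : ℝ) + 1) ^ (-(1:ℝ))) r]
    exact harm_le r
  have hlqq : lqq a⁻¹ θ = ∑ j, |θ (e j)| ^ a⁻¹ := by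
    rw [lqq_eq_sum hθ]
    exact (Equiv.sum_comp e fun i => |θ i| ^ a⁻¹).symm
  have hL1 : (0:ℝ) ≤ Real.log r := Real.log_nonneg (by exact_mod_cast hr)
  have hlqqb : lqq a⁻¹ θ ≤ c₂ ^ a⁻¹ * b0 ^ a⁻¹ * (1 + Real.log r) := by
    rw [hlqq]
    calc ∑ j, |θ (e j)| ^ a⁻¹ ≤ ∑ j : Fin r, c₂ ^ a⁻¹ * b0 ^ a⁻¹ * ((j.val : ℝ) + 1) ^ (-(1:ℝ)) :=
          Finset.sum_le_sum fun j _ => hterm j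
      _ = c₂ ^ a⁻¹ * b0 ^ a⁻¹ * ∑ j : Fin r, ((j.val : ℝ) + 1) ^ (-(1:ℝ)) := by
          rw [← Finset.mul_sum]
      _ ≤ c₂ ^ a⁻¹ * b0 ^ a⁻¹ * (1 + Real.log r) := by
          apply mul_le_mul_of_nonneg_left hsum1 (by positivity)
  -- b0 ^ a⁻¹ bound
  have hb0q : b0 ^ a⁻¹ ≤ T ^ a⁻¹ / c₁ ^ a⁻¹ * ((m:ℝ) + 1) := by
    have h1 : b0 ^ a⁻¹ ≤ (T * ((m : ℝ) + 1) ^ a / c₁) ^ a⁻¹ :=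
      Real.rpow_le_rpow hb0.le hb0ub hq0
    refine h1.trans (le_of_eq ?_)
    rw [Real.div_rpow (by positivity) hc₁.le, Real.mul_rpow hT.le hma.le,
      ← Real.rpow_mul (by positivity : (0:ℝ) ≤ (m:ℝ)+1), haq, Real.rpow_one]
    ring
  -- value bound
  have hTq : T ^ a⁻¹ * T ^ ((2:ℝ) - a⁻¹) = T ^ 2 := by
    rw [← Real.rpow_add hT]
    rw [show a⁻¹ + (2 - a⁻¹) = (2:ℝ) by ring]
    rw [show (2:ℝ) = ((2:ℕ):ℝ) by norm_num, Real.rpow_natCast]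
  have hTpow : (0:ℝ) < T ^ ((2:ℝ) - a⁻¹) := Real.rpow_pos_of_pos hT _
  have hPb : lqq a⁻¹ θ * T ^ ((2:ℝ) - a⁻¹) ≤
      (c₂ / c₁) ^ a⁻¹ * (2 * m) * (1 + Real.log r) * T ^ 2 := by
    have h1 : lqq a⁻¹ θ * T ^ ((2:ℝ) - a⁻¹) ≤
        c₂ ^ a⁻¹ * (T ^ a⁻¹ / c₁ ^ a⁻¹ * ((m:ℝ) + 1)) * (1 + Real.log r) * T ^ ((2:ℝ) - a⁻¹) := by
      apply mul_le_mul_of_nonneg_right _ hTpow.le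
      calc lqq a⁻¹ θ ≤ c₂ ^ a⁻¹ * b0 ^ a⁻¹ * (1 + Real.log r) := hlqqb
        _ ≤ c₂ ^ a⁻¹ * (T ^ a⁻¹ / c₁ ^ a⁻¹ * ((m:ℝ) + 1)) * (1 + Real.log r) := by
            apply mul_le_mul_of_nonneg_right _ (by linarith)
            exact mul_le_mul_of_nonneg_left hb0q (by positivity)
    refine h1.trans ?_
    have hm2 : ((m:ℝ) + 1) ≤ 2 * m := by
      have : (1:ℝ) ≤ m := by exact_mod_cast hm1
      linarith
    have e1 : c₂ ^ a⁻¹ * (T ^ a⁻¹ / c₁ ^ a⁻¹ * ((m:ℝ) + 1)) * (1 + Real.log r) * T ^ ((2:ℝ) - a⁻¹)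
        = (c₂ / c₁) ^ a⁻¹ * ((m:ℝ) + 1) * (1 + Real.log r) * T ^ 2 := by
      rw [Real.div_rpow hc₂.le hc₁.le]
      rw [← hTq]
      ring
    rw [e1]
    apply mul_le_mul_of_nonneg_right _ (by positivity)
    apply mul_le_mul_of_nonneg_right _ (by linarith)
    exact mul_le_mul_of_nonneg_left hm2 (by positivity)
  -- assemble
  set S := (fun q => lqq q θ * T ^ (2 - q)) '' Set.Icc (0:ℝ) 2 with hSdef
  have hbdd : BddBelow S := by
    refine ⟨0, fun x hx => ?_⟩
    obtain ⟨q, hq, rfl⟩ := hx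
    exact mul_nonneg (lqq_nonneg q θ) (Real.rpow_nonneg hT.le _)
  have hinfle : sInf S ≤ lqq a⁻¹ θ * T ^ ((2:ℝ) - a⁻¹) :=
    csInf_le hbdd ⟨a⁻¹, ⟨hq0, hq2⟩, rfl⟩
  have hinf0 : 0 ≤ sInf S := by
    apply Real.sInf_nonneg
    rintro x ⟨q, hq, rfl⟩
    exact mul_nonneg (lqq_nonneg q θ) (Real.rpow_nonneg hT.le _)
  have hRHS := rhs_lb θ T hT e m hcard
  set X := (c₁ / c₂) ^ a⁻¹ / 2 with hXdef
  have hX : 0 < X := by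
    apply div_pos (Real.rpow_pos_of_pos (by positivity) _) (by norm_num)
  have hL : (0:ℝ) < 1 + Real.log r := by linarith
  have hκ : 0 ≤ min 1 X / (1 + Real.log r) := by positivity
  have hXY : X * ((c₂ / c₁) ^ a⁻¹ * 2) = 1 := by
    rw [hXdef]
    rw [div_mul_eq_mul_div, mul_comm ((c₂/c₁) ^ a⁻¹) 2, ← mul_assoc]
    rw [mul_comm ((c₁/c₂) ^ a⁻¹) 2, mul_assoc, ← Real.mul_rpow (by positivity) (by positivity)]
    rw [div_mul_div_comm]
    rw [show c₁ * c₂ / (c₂ * c₁) = 1 by field_simp]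
    rw [Real.one_rpow]
    field_simp
  calc min 1 X / (1 + Real.log r) * sInf S
      ≤ min 1 X / (1 + Real.log r) * (lqq a⁻¹ θ * T ^ ((2:ℝ) - a⁻¹)) :=
        mul_le_mul_of_nonneg_left hinfle hκ
    _ ≤ min 1 X / (1 + Real.log r) * ((c₂ / c₁) ^ a⁻¹ * (2 * m) * (1 + Real.log r) * T ^ 2) :=
        mul_le_mul_of_nonneg_left hPb hκ
    _ = min 1 X * ((c₂ / c₁) ^ a⁻¹ * 2) * ((m:ℝ) * T ^ 2) := by
        field_simp
    _ ≤ X * ((c₂ / c₁) ^ a⁻¹ * 2) * ((m:ℝ) * T ^ 2) := by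
        apply mul_le_mul_of_nonneg_right _ (by positivity)
        exact mul_le_mul_of_nonneg_right (min_le_right _ _) (by positivity)
    _ = (m:ℝ) * T ^ 2 := by rw [hXY, one_mul]
    _ ≤ ∑ j, (min T |θ j|) ^ 2 := hRHS

lemma midB (a c₁ c₂ : ℝ) (ha : 0 < a) (hc₁ : 0 < c₁) (hc₁₂ : c₁ ≤ c₂) (ha2 : a < 1/2)
    {r : ℕ} (hr : 0 < r) (θ : Fin r → ℝ) (T : ℝ) (hT : 0 < T) (e : Fin r ≃ Fin r)
    (hmono : ∀ j k : Fin r, j ≤ k → |θ (e k)| ≤ |θ (e j)|)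
    (hlb : ∀ j : Fin r, c₁ * ((j.val : ℝ) + 1) ^ (-a) * |θ (e ⟨0, hr⟩)| ≤ |θ (e j)|)
    (hub : ∀ j : Fin r, |θ (e j)| ≤ c₂ * ((j.val : ℝ) + 1) ^ (-a) * |θ (e ⟨0, hr⟩)|)
    (hθ : ∀ i, θ i ≠ 0)
    (hge : ∃ j, T ≤ |θ (e j)|) (hlt : ∃ j, |θ (e j)| < T) :
    min 1 (c₁ ^ 2 * (1 - 2 * a) / (c₂ ^ 2 * 2 ^ (2 * a))) *
        sInf ((fun q => lqq q θ * T ^ (2 - q)) '' Set.Icc (0:ℝ) 2) ≤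
      ∑ j, (min T |θ j|) ^ 2 := by
  set b0 := |θ (e ⟨0, hr⟩)| with hb0def
  have hb0 : 0 < b0 := abs_pos.mpr (hθ _)
  obtain ⟨m, hm1, hmr, hchar, hcard⟩ := mid_setup hr θ T e hmono hge hlt
  have hc₂ : 0 < c₂ := lt_of_lt_of_le hc₁ hc₁₂
  set s := 2 * a with hsdef
  have hs0 : 0 < s := by positivity
  have hs1 : s < 1 := by rw [hsdef]; linarith
  have hm0 : (0:ℝ) < m := by exact_mod_cast hm1
  have hm1' : (1:ℝ) ≤ m := by exact_mod_cast hm1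
  -- T lower bound via index m
  have hkT : |θ (e ⟨m, hmr⟩)| < T := by
    have := (hchar ⟨m, hmr⟩).not.mpr (by simp)
    simpa using not_le.mp this
  have hTlb : c₁ * ((m : ℝ) + 1) ^ (-a) * b0 < T := lt_of_le_of_lt (hlb ⟨m, hmr⟩) hkT
  set F := univ.filter fun j : Fin r => T ≤ |θ (e j)| with hFdef
  have hcharF : ∀ j : Fin r, j ∈ F ↔ j.val < m := by
    intro j
    rw [hFdef, Finset.mem_filter]
    simp [hchar j]
  -- sum over F of squares
  have hsq : ∀ j : Fin r, |θ (e j)| ^ 2 ≤ c₂ ^ 2 * b0 ^ 2 * ((j.val : ℝ) + 1) ^ (-s) := by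
    intro j
    have h1 : |θ (e j)| ^ 2 ≤ (c₂ * ((j.val:ℝ)+1) ^ (-a) * b0) ^ 2 := by
      apply pow_le_pow_left₀ (abs_nonneg _) (hub j)
    refine h1.trans (le_of_eq ?_)
    have h2 : (((j.val:ℝ)+1) ^ (-a)) ^ (2:ℕ) = ((j.val:ℝ)+1) ^ (-s) := by
      rw [← Real.rpow_natCast (((j.val:ℝ)+1) ^ (-a)) 2,
        ← Real.rpow_mul (by positivity : (0:ℝ) ≤ (j.val:ℝ)+1)]
      norm_num [hsdef]
      ring_nf
    rw [mul_pow, mul_pow, h2]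
    ring
  have hsumF : ∑ j ∈ F, |θ (e j)| ^ 2 ≤ c₂ ^ 2 * b0 ^ 2 * ((m:ℝ) ^ (1 - s) / (1 - s)) := by
    calc ∑ j ∈ F, |θ (e j)| ^ 2 ≤ ∑ j ∈ F, c₂ ^ 2 * b0 ^ 2 * ((j.val : ℝ) + 1) ^ (-s) :=
          Finset.sum_le_sum fun j _ => hsq j
      _ = c₂ ^ 2 * b0 ^ 2 * ∑ j ∈ F, ((j.val : ℝ) + 1) ^ (-s) := by rw [← Finset.mul_sum]
      _ = c₂ ^ 2 * b0 ^ 2 * ∑ i ∈ range m, ((i : ℝ) + 1) ^ (-s) := by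
          rw [sum_lowerset hmr.le F hcharF (fun i => ((i : ℝ) + 1) ^ (-s))]
      _ ≤ c₂ ^ 2 * b0 ^ 2 * ((m:ℝ) ^ (1 - s) / (1 - s)) := by
          exact mul_le_mul_of_nonneg_left (sum_rpow_le hs0 hs1 m) (by positivity)
  -- m T^2 lower bound
  have hmT : c₁ ^ 2 * 2 ^ (-s) * (b0 ^ 2 * (m:ℝ) ^ (1 - s)) ≤ (m:ℝ) * T ^ 2 := by
    have hT1 : c₁ ^ 2 * (((m:ℝ) + 1) ^ (-a)) ^ 2 * b0 ^ 2 ≤ T ^ 2 := by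
      nlinarith [hTlb, mul_pos (mul_pos hc₁ (Real.rpow_pos_of_pos (by positivity : (0:ℝ) < (m:ℝ)+1) (-a))) hb0]
    have h2 : (((m:ℝ)+1) ^ (-a)) ^ (2:ℕ) = ((m:ℝ)+1) ^ (-s) := by
      rw [← Real.rpow_natCast (((m:ℝ)+1) ^ (-a)) 2,
        ← Real.rpow_mul (by positivity : (0:ℝ) ≤ (m:ℝ)+1)]
      norm_num [hsdef]
      ring_nf
    rw [h2] at hT1
    have h3 : ((2:ℝ) * m) ^ (-s) ≤ ((m:ℝ) + 1) ^ (-s) := by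
      apply Real.rpow_le_rpow_of_nonpos (by positivity) (by linarith [hm1']) (by linarith)
    have h4 : ((2:ℝ) * m) ^ (-s) = 2 ^ (-s) * (m:ℝ) ^ (-s) :=
      Real.mul_rpow (by norm_num) hm0.le
    have h5 : (m:ℝ) * (m:ℝ) ^ (-s) = (m:ℝ) ^ (1 - s) := by
      nth_rewrite 1 [← Real.rpow_one (m:ℝ)]
      rw [← Real.rpow_add hm0, sub_eq_add_neg]
    calc c₁ ^ 2 * 2 ^ (-s) * (b0 ^ 2 * (m:ℝ) ^ (1 - s))
        = (m:ℝ) * (c₁ ^ 2 * (2 ^ (-s) * (m:ℝ) ^ (-s)) * b0 ^ 2) := by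
          rw [← h5]; ring
      _ ≤ (m:ℝ) * (c₁ ^ 2 * ((m:ℝ) + 1) ^ (-s) * b0 ^ 2) := by
          apply mul_le_mul_of_nonneg_left _ hm0.le
          rw [← h4]
          apply mul_le_mul_of_nonneg_right _ (by positivity)
          exact mul_le_mul_of_nonneg_left h3 (by positivity)
      _ ≤ (m:ℝ) * T ^ 2 := mul_le_mul_of_nonneg_left hT1 hm0.le
  -- value at q = 2
  have hval : lqq 2 θ * T ^ ((2:ℝ) - 2) = ∑ j ∈ F, |θ (e j)| ^ 2 + ∑ j ∈ Fᶜ, |θ (e j)| ^ 2 := by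
    have h1 : lqq 2 θ = ∑ j, |θ (e j)| ^ (2:ℕ) := by
      rw [lqq_eq_sum hθ]
      rw [← Equiv.sum_comp e fun i => |θ i| ^ (2:ℝ)]
      exact Finset.sum_congr rfl fun j _ => by rw [← Real.rpow_natCast]; norm_num
    rw [h1, show (2:ℝ) - 2 = 0 by norm_num, Real.rpow_zero, mul_one]
    rw [← Finset.sum_add_sum_compl F]
  -- RHS decomposition
  have hRHS : ∑ j, (min T |θ j|) ^ 2 = (m:ℝ) * T ^ 2 + ∑ j ∈ Fᶜ, |θ (e j)| ^ 2 := by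
    rw [← Equiv.sum_comp e fun i => (min T |θ i|) ^ 2]
    rw [← Finset.sum_add_sum_compl F]
    congr 1
    · rw [Finset.sum_congr rfl (fun j hj => ?_)]
      · rw [Finset.sum_const, hcard, nsmul_eq_mul]
      · rw [min_eq_left]
        rw [hFdef, Finset.mem_filter] at hj
        exact hj.2
    · refine Finset.sum_congr rfl fun j hj => ?_
      rw [min_eq_right]
      rw [Finset.mem_compl, hFdef, Finset.mem_filter] at hj
      simp only [Finset.mem_univ, true_and] at hj
      exact (not_le.mp hj).le
  -- assemble
  set c' := c₁ ^ 2 * (1 - 2 * a) / (c₂ ^ 2 * 2 ^ (2 * a)) with hc'def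
  have h2s : (0:ℝ) < 2 ^ (2*a) := Real.rpow_pos_of_pos (by norm_num) _
  have hc' : 0 < c' := by
    apply div_pos
    · have h12 : (0:ℝ) < 1 - 2 * a := by linarith
      positivity
    · positivity
  have hkey : min 1 c' * (∑ j ∈ F, |θ (e j)| ^ 2) ≤ (m:ℝ) * T ^ 2 := by
    have h2s' : (2:ℝ) ^ (-s) = (2 ^ (2*a))⁻¹ := by
      rw [hsdef, ← Real.rpow_neg_one, ← Real.rpow_mul (by norm_num : (0:ℝ) ≤ 2)]
      congr 1; ring
    have hsumF' : ∑ j ∈ F, |θ (e j)| ^ 2 ≤ c₂ ^ 2 / (1 - s) * (b0 ^ 2 * (m:ℝ) ^ (1 - s)) := by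
      refine hsumF.trans (le_of_eq ?_); ring
    have hFnn : (0:ℝ) ≤ ∑ j ∈ F, |θ (e j)| ^ 2 :=
      Finset.sum_nonneg fun j _ => by positivity
    calc min 1 c' * (∑ j ∈ F, |θ (e j)| ^ 2)
        ≤ c' * (c₂ ^ 2 / (1 - s) * (b0 ^ 2 * (m:ℝ) ^ (1 - s))) := by
          apply mul_le_mul (min_le_right _ _) hsumF' hFnn hc'.le
      _ = c₁ ^ 2 * 2 ^ (-s) * (b0 ^ 2 * (m:ℝ) ^ (1 - s)) := by
          rw [hc'def, h2s', hsdef]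
          have : (1:ℝ) - 2*a ≠ 0 := by rw [hsdef] at hs1; intro h; linarith
          field_simp
      _ ≤ (m:ℝ) * T ^ 2 := hmT
  -- sInf bound
  have hbdd : BddBelow ((fun q => lqq q θ * T ^ (2 - q)) '' Set.Icc (0:ℝ) 2) := by
    refine ⟨0, fun x hx => ?_⟩
    obtain ⟨q, hq, rfl⟩ := hx
    exact mul_nonneg (lqq_nonneg q θ) (Real.rpow_nonneg hT.le _)
  have hinfle : sInf ((fun q => lqq q θ * T ^ (2 - q)) '' Set.Icc (0:ℝ) 2) ≤
      lqq 2 θ * T ^ ((2:ℝ) - 2) :=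
    csInf_le hbdd ⟨2, ⟨by norm_num, le_refl 2⟩, rfl⟩
  have hmin0 : (0:ℝ) ≤ min 1 c' := le_min (by norm_num) hc'.le
  have hmin1 : min 1 c' ≤ 1 := min_le_left _ _
  have hFcnn : (0:ℝ) ≤ ∑ j ∈ Fᶜ, |θ (e j)| ^ 2 :=
    Finset.sum_nonneg fun j _ => by positivity
  calc min 1 c' * sInf ((fun q => lqq q θ * T ^ (2 - q)) '' Set.Icc (0:ℝ) 2)
      ≤ min 1 c' * (lqq 2 θ * T ^ ((2:ℝ) - 2)) := mul_le_mul_of_nonneg_left hinfle hmin0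
    _ = min 1 c' * (∑ j ∈ F, |θ (e j)| ^ 2) + min 1 c' * ∑ j ∈ Fᶜ, |θ (e j)| ^ 2 := by
        rw [hval]; ring
    _ ≤ (m:ℝ) * T ^ 2 + ∑ j ∈ Fᶜ, |θ (e j)| ^ 2 := by
        apply add_le_add hkey
        nlinarith
    _ = ∑ j, (min T |θ j|) ^ 2 := hRHS.symm

/-- Proposition 1(iii), tightness under polynomial decay: if the absolute values
of the components of `θ`, arranged in descending order via a permutation `e`, satisfy
`c₁ j^{−a} ≤ |θ_{(j)}|/|θ_{(1)}| ≤ c₂ j^{−a}`, then there is a constant `c > 0` depending only on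
`a, c₁, c₂` such that the sum `∑ j min(σρ,|θ_j|)²` dominates
`(c/log(e·r))·inf_{q∈[0,2]} ‖θ‖_q^q (σρ)^{2−q}` when `a ≥ 1/2`, and
`c·inf_{q∈[0,2]} ‖θ‖_q^q (σρ)^{2−q}` when `a < 1/2`. -/
theorem stmt_5 (a c₁ c₂ : ℝ) (ha : 0 < a) (hc₁ : 0 < c₁) (hc₁₂ : c₁ ≤ c₂) :
    ∃ c : ℝ, 0 < c ∧
      ∀ (r : ℕ) (hr : 0 < r) (θ : Fin r → ℝ) (σ ρ : ℝ), 0 < σ → 0 < ρ → θ ≠ 0 →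
        ∀ e : Fin r ≃ Fin r,
          (∀ j k : Fin r, j ≤ k → |θ (e k)| ≤ |θ (e j)|) →
          (∀ j : Fin r,
            c₁ * ((j : ℝ) + 1) ^ (-a) ≤ |θ (e j)| / |θ (e ⟨0, hr⟩)| ∧
              |θ (e j)| / |θ (e ⟨0, hr⟩)| ≤ c₂ * ((j : ℝ) + 1) ^ (-a)) →
          ((1 / 2 ≤ a →
              c / Real.log (Real.exp 1 * r) *
                  sInf ((fun q => lqq q θ * (σ * ρ) ^ (2 - q)) '' Set.Icc (0:ℝ) 2) ≤
                ∑ j, (min (σ * ρ) |θ j|) ^ 2) ∧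
            (a < 1 / 2 →
              c * sInf ((fun q => lqq q θ * (σ * ρ) ^ (2 - q)) '' Set.Icc (0:ℝ) 2) ≤
                ∑ j, (min (σ * ρ) |θ j|) ^ 2)) := by
  have hc₂ : 0 < c₂ := lt_of_lt_of_le hc₁ hc₁₂
  set cA := min 1 ((c₁ / c₂) ^ a⁻¹ / 2) with hcA
  set cB := min 1 (c₁ ^ 2 * (1 - 2 * a) / (c₂ ^ 2 * 2 ^ (2 * a))) with hcB
  refine ⟨if a < 1/2 then cB else cA, ?_, ?_⟩
  · split
    · rename_i h
      apply lt_min (by norm_num)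
      apply div_pos
      · have : (0:ℝ) < 1 - 2 * a := by linarith
        positivity
      · positivity
    · exact lt_min (by norm_num) (by positivity)
  intro r hr θ σ ρ hσ hρ hθne e hmono hdecay
  set T := σ * ρ with hTdef
  have hT : 0 < T := mul_pos hσ hρ
  set b0 := |θ (e ⟨0, hr⟩)| with hb0def
  have hb0 : 0 < b0 := by
    obtain ⟨i, hi⟩ := Function.ne_iff.mp hθne
    have h1 : 0 < |θ (e (e.symm i))| := by
      rw [Equiv.apply_symm_apply]
      exact abs_pos.mpr hi
    have h2 : |θ (e (e.symm i))| ≤ b0 := hmono ⟨0, hr⟩ (e.symm i) (Fin.mk_le_of_le_val (Nat.zero_le _))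
    linarith
  have hlb : ∀ j : Fin r, c₁ * ((j.val : ℝ) + 1) ^ (-a) * b0 ≤ |θ (e j)| := by
    intro j
    have := (hdecay j).1
    rw [le_div_iff₀ hb0] at this
    linarith
  have hub : ∀ j : Fin r, |θ (e j)| ≤ c₂ * ((j.val : ℝ) + 1) ^ (-a) * b0 := by
    intro j
    have := (hdecay j).2
    rw [div_le_iff₀ hb0] at this
    linarith
  have hθall : ∀ i, θ i ≠ 0 := by
    intro i
    have h1 := hlb (e.symm i)
    rw [Equiv.apply_symm_apply] at h1
    have h2 : (0:ℝ) < c₁ * (((e.symm i).val : ℝ) + 1) ^ (-a) * b0 := by positivity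
    intro h
    rw [h, abs_zero] at h1
    linarith
  have hLog : (0:ℝ) ≤ Real.log r := Real.log_nonneg (by exact_mod_cast hr)
  have hlogr : Real.log (Real.exp 1 * r) = 1 + Real.log r := by
    rw [Real.log_mul (Real.exp_ne_zero 1) (by exact_mod_cast hr.ne' : (r:ℝ) ≠ 0), Real.log_exp]
  constructor
  · -- a ≥ 1/2
    intro hA
    have hsplit : ¬ a < 1/2 := not_lt.mpr hA
    rw [if_neg hsplit, hlogr]
    have hcA1 : cA ≤ 1 := min_le_left _ _
    have hcA0 : 0 < cA := lt_min (by norm_num) (by positivity)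
    apply core hr θ T hT hθall (κ := cA / (1 + Real.log r))
    · positivity
    · rw [div_le_one (by linarith)]
      linarith
    · intro hge hlt
      obtain ⟨j, hj⟩ := hge
      obtain ⟨j', hj'⟩ := hlt
      have hge' : ∃ j, T ≤ |θ (e j)| := ⟨e.symm j, by rwa [Equiv.apply_symm_apply]⟩
      have hlt' : ∃ j, |θ (e j)| < T := ⟨e.symm j', by rwa [Equiv.apply_symm_apply]⟩
      have := midA a c₁ c₂ ha hc₁ hc₁₂ hA hr θ T hT e hmono hlb hub hθall hge' hlt'
      calc cA / (1 + Real.log r) * sInf ((fun q => lqq q θ * T ^ (2 - q)) '' Set.Icc (0:ℝ) 2)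
          = cA / (1 + Real.log r) * sInf ((fun q => lqq q θ * T ^ (2 - q)) '' Set.Icc (0:ℝ) 2) := rfl
        _ ≤ ∑ j, (min T |θ j|) ^ 2 := this
  · -- a < 1/2
    intro hB
    rw [if_pos hB]
    have hcB0 : 0 < cB := by
      apply lt_min (by norm_num)
      apply div_pos
      · have : (0:ℝ) < 1 - 2 * a := by linarith
        positivity
      · positivity
    apply core hr θ T hT hθall (κ := cB)
    · exact hcB0.le
    · exact min_le_left _ _
    · intro hge hlt
      obtain ⟨j, hj⟩ := hge
      obtain ⟨j', hj'⟩ := hlt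
      have hge' : ∃ j, T ≤ |θ (e j)| := ⟨e.symm j, by rwa [Equiv.apply_symm_apply]⟩
      have hlt' : ∃ j, |θ (e j)| < T := ⟨e.symm j', by rwa [Equiv.apply_symm_apply]⟩
      exact midB a c₁ c₂ ha hc₁ hc₁₂ hB hr θ T hT e hmono hlb hub hθall hge' hlt'
end

section
/- Theorem 4, upper bound (MSE of the GCT estimator, fixed design). Assume the sub-Weibull noise assumption with parameters σ > 0 and α ∈ (0,2]. Let T_τ be a generalized thresholding function with constant c₀, let φ ≥ 0, fix δ ∈ (0,1), set ρ = (2/√n)(log(2r/δ))^{1/α} and take τ = λ̂₁^{φ/2}·σρ. Then there is a constant C depending only on c₀ such that, with probability at least 1 − δ, the GCT estimator β̂ = Û Λ̂^{−1−φ} T_τ(Λ̂^{−1+φ} Û^⊤ X^⊤ Y / n) satisfies MSE(β̂) ≤ C · ∑_{j=1}^r min( (λ̂₁/λ̂_j)^{φ/2}·σρ, |θ_j| )². -/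
open MeasureTheory Matrix Finset

lemma gct_core {c₀ K τ a t : ℝ} (hK32 : (3:ℝ)/2 ≤ K) (hKc : c₀ + 1 ≤ K)
    (hτ : 0 ≤ τ) (h1 : |t| ≤ c₀ * |a|) (h2 : |t - a| ≤ 3/2 * τ) :
    (t - a)^2 ≤ K^2 * (min τ |a|)^2 := by
  have htri : |t - a| ≤ |t| + |a| := by
    calc |t - a| = |t + (-a)| := by ring_nf
    _ ≤ |t| + |(-a)| := abs_add_le _ _
    _ = |t| + |a| := by rw [abs_neg]
  have hmin : |t - a| ≤ K * min τ |a| := by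
    rcases le_total τ |a| with h | h
    · rw [min_eq_left h]; nlinarith [abs_nonneg (t - a)]
    · rw [min_eq_right h]; nlinarith [abs_nonneg a]
  have hm0 : 0 ≤ min τ |a| := le_min hτ (abs_nonneg a)
  nlinarith [mul_self_le_mul_self (abs_nonneg (t - a)) hmin, sq_abs (t - a)]

lemma gct_coord {c₀ K φ τ σρ l1 l u z : ℝ} (Tz : ℝ)
    (hK32 : (3:ℝ)/2 ≤ K) (hKc : c₀ + 1 ≤ K)
    (hl1 : 0 < l1) (hl : 0 < l)
    (hτ : τ = l1 ^ (φ/2) * σρ) (hτpos : 0 < τ)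
    (hz : |z - l ^ ((φ+1)/2) * u| ≤ τ/2)
    (h1 : |Tz| ≤ c₀ * |l ^ ((φ+1)/2) * u|)
    (h2 : |Tz - z| ≤ τ) :
    l * (l ^ ((-(1:ℝ) - φ)/2) * Tz - u)^2
      ≤ K^2 * (min ((l1/l) ^ (φ/2) * σρ) |Real.sqrt l * u|)^2 := by
  have hcore : (Tz - l ^ ((φ+1)/2) * u)^2 ≤ K^2 * (min τ |l ^ ((φ+1)/2) * u|)^2 := by
    refine gct_core hK32 hKc hτpos.le h1 ?_
    calc |Tz - l ^ ((φ+1)/2) * u| = |(Tz - z) + (z - l ^ ((φ+1)/2) * u)| := by ring_nf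
    _ ≤ |Tz - z| + |z - l ^ ((φ+1)/2) * u| := abs_add_le _ _
    _ ≤ τ + τ/2 := add_le_add h2 hz
    _ = 3/2 * τ := by ring
  have hea : l ^ ((-(1:ℝ) - φ)/2) * l ^ ((φ+1)/2) = 1 := by
    rw [← Real.rpow_add hl]
    have h : (-(1:ℝ) - φ)/2 + (φ+1)/2 = 0 := by ring
    rw [h, Real.rpow_zero]
  have hfu : l ^ ((-(1:ℝ) - φ)/2) * Tz - u
      = l ^ ((-(1:ℝ) - φ)/2) * (Tz - l ^ ((φ+1)/2) * u) := by
    linear_combination u * hea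
  have hsq : l * (l ^ ((-(1:ℝ) - φ)/2))^2 = (l ^ (-(φ/2)))^2 := by
    rw [pow_two, pow_two]
    nth_rewrite 1 [← Real.rpow_one l]
    rw [← Real.rpow_add hl, ← Real.rpow_add hl, ← Real.rpow_add hl]
    congr 1
    ring
  have hc : (0:ℝ) < l ^ (-(φ/2)) := Real.rpow_pos_of_pos hl _
  have hmτ : l ^ (-(φ/2)) * τ = (l1/l) ^ (φ/2) * σρ := by
    rw [hτ, Real.div_rpow hl1.le hl.le, Real.rpow_neg hl.le]
    field_simp
  have hmθ : l ^ (-(φ/2)) * |l ^ ((φ+1)/2) * u| = |Real.sqrt l * u| := by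
    rw [abs_mul, abs_mul, abs_of_pos (Real.rpow_pos_of_pos hl _),
      abs_of_pos (Real.sqrt_pos.2 hl), ← mul_assoc]
    congr 1
    rw [Real.sqrt_eq_rpow, ← Real.rpow_add hl]
    congr 1
    ring
  have hmin : l ^ (-(φ/2)) * min τ |l ^ ((φ+1)/2) * u|
      = min ((l1/l) ^ (φ/2) * σρ) |Real.sqrt l * u| := by
    rw [← hmτ, ← hmθ]
    rcases le_total τ |l ^ ((φ+1)/2) * u| with h | h
    · rw [min_eq_left h, min_eq_left (mul_le_mul_of_nonneg_left h hc.le)]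
    · rw [min_eq_right h, min_eq_right (mul_le_mul_of_nonneg_left h hc.le)]
  calc l * (l ^ ((-(1:ℝ) - φ)/2) * Tz - u)^2
      = l * (l ^ ((-(1:ℝ) - φ)/2))^2 * (Tz - l ^ ((φ+1)/2) * u)^2 := by rw [hfu]; ring
  _ = (l ^ (-(φ/2)))^2 * (Tz - l ^ ((φ+1)/2) * u)^2 := by rw [hsq]
  _ ≤ (l ^ (-(φ/2)))^2 * (K^2 * (min τ |l ^ ((φ+1)/2) * u|)^2) :=
      mul_le_mul_of_nonneg_left hcore (by positivity)
  _ = K^2 * (l ^ (-(φ/2)) * min τ |l ^ ((φ+1)/2) * u|)^2 := by ring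
  _ = K^2 * (min ((l1/l) ^ (φ/2) * σρ) |Real.sqrt l * u|)^2 := by rw [hmin]

/-- Theorem 4, upper bound: MSE of the GCT estimator, fixed design.
For every constant `c₀` of a generalized thresholding function there is a constant `C`
(depending only on `c₀`) such that: for any fixed design model with sub-Weibull noise
(parameters `σ, α`), `φ ≥ 0`, `δ ∈ (0,1)`, `ρ = (2/√n)(log(2r/δ))^{1/α}` and threshold
`τ = λ̂₁^{φ/2} σρ`, the GCT estimator `β̂ = Û Λ̂^{−1−φ} T_τ(Λ̂^{−1+φ} Û^⊤ X^⊤Y/n)` satisfies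
with probability `≥ 1 − δ`:
`MSE(β̂) ≤ C ∑_j min((λ̂₁/λ̂_j)^{φ/2} σρ, |θ_j|)²`. -/
theorem stmt_11 (c₀ : ℝ) (hc₀ : 0 < c₀) :
    ∃ C : ℝ, 0 < C ∧
      ∀ (Ω : Type) (_ : MeasurableSpace Ω) (P : Measure Ω) (_ : IsProbabilityMeasure P)
        (n d r : ℕ) (_hn : 0 < n) (hr : 0 < r)
        (X : Matrix (Fin n) (Fin d) ℝ) (β : Fin d → ℝ)
        (U : Matrix (Fin d) (Fin r) ℝ) (lam : Fin r → ℝ),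
        Uᵀ * U = 1 →
        (∀ j, 0 < lam j) →
        (∀ j k : Fin r, j ≤ k → lam k ≤ lam j) →
        (n : ℝ)⁻¹ • (Xᵀ * X) = U * Matrix.diagonal lam * Uᵀ →
        ∀ (ε : Ω → Fin n → ℝ), Measurable ε →
        ∀ (σ α : ℝ), 0 < σ → α ∈ Set.Ioc (0:ℝ) 2 →
        (∀ w : Fin n → ℝ, ∑ i, (w i) ^ 2 = 1 → ∀ t : ℝ, 0 < t →
          P {ω | t ≤ |∑ i, w i * ε ω i|} ≤ ENNReal.ofReal (2 * Real.exp (-((t / σ) ^ α)))) →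
        ∀ (φ : ℝ), 0 ≤ φ →
        ∀ δ : ℝ, δ ∈ Set.Ioo (0:ℝ) 1 →
        ∀ ρ τ : ℝ,
          ρ = 2 / Real.sqrt n * Real.log (2 * r / δ) ^ (1 / α) →
          τ = lam ⟨0, hr⟩ ^ (φ / 2) * (σ * ρ) →
        ∀ T : ℝ → ℝ,
          (∀ z z' : ℝ, |z - z'| ≤ τ / 2 → |T z| ≤ c₀ * |z'|) →
          (∀ z : ℝ, |T z - z| ≤ τ) →
        (let θ : Fin r → ℝ := fun j => Real.sqrt (lam j) * (Uᵀ.mulVec β) j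
         let bhat : Ω → Fin d → ℝ := fun ω => U.mulVec fun j =>
           lam j ^ ((-(1:ℝ) - φ) / 2) *
             T (lam j ^ ((φ - 1) / 2) * (Uᵀ.mulVec (Xᵀ.mulVec (X.mulVec β + ε ω))) j / n)
         let MSE : (Fin d → ℝ) → ℝ := fun b =>
           (b - β) ⬝ᵥ (((n : ℝ)⁻¹ • (Xᵀ * X)).mulVec (b - β))
         ENNReal.ofReal (1 - δ) ≤
           P {ω | MSE (bhat ω) ≤
             C * ∑ j, (min ((lam ⟨0, hr⟩ / lam j) ^ (φ / 2) * (σ * ρ)) |θ j|) ^ 2}) := by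
  classical
  set K := max ((3:ℝ)/2) (c₀ + 1) with hK
  have hK32 : (3:ℝ)/2 ≤ K := le_max_left _ _
  have hKc : c₀ + 1 ≤ K := le_max_right _ _
  have hKpos : 0 < K := lt_of_lt_of_le (by norm_num) hK32
  refine ⟨K ^ 2, by positivity, ?_⟩
  intro Ω _ P _ n d r hn hr X β U lam hU hlam hmono hSig ε hε σ α hσ hα hsubw φ hφ δ hδ ρ τ hρ hτ T hT1 hT2
  intro θ bhat MSE
  have hn' : (0:ℝ) < n := by exact_mod_cast hn
  have hr' : (0:ℝ) < r := by exact_mod_cast hr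
  set j0 : Fin r := ⟨0, hr⟩ with hj0
  have hlam1 : ∀ j, lam j ≤ lam j0 := fun j => hmono j0 j (by simp [hj0, Fin.le_def])
  set L := Real.log (2 * r / δ) ^ (1 / α) with hLdef
  have hlog : 0 < Real.log (2 * r / δ) :=
    Real.log_pos (by rw [lt_div_iff₀ hδ.1]; nlinarith [hδ.2, (by exact_mod_cast hr : (1:ℝ) ≤ r)])
  have hLpos : 0 < L := Real.rpow_pos_of_pos hlog _
  set t₀ := σ * L with ht₀def
  have ht₀ : 0 < t₀ := mul_pos hσ hLpos
  have hsqn : 0 < Real.sqrt n := Real.sqrt_pos.2 hn'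
  have hρpos : 0 < ρ := by rw [hρ]; exact mul_pos (by positivity) hLpos
  have hτpos : 0 < τ := by
    rw [hτ]; exact mul_pos (Real.rpow_pos_of_pos (hlam j0) _) (mul_pos hσ hρpos)
  -- matrix identities
  set D := Matrix.diagonal lam with hD
  have hXtX : Xᵀ * X = (n:ℝ) • (U * D * Uᵀ) := by
    rw [← hSig, smul_smul, mul_inv_cancel₀ (ne_of_gt hn'), one_smul]
  set M := X * U with hM
  have hMtM : Mᵀ * M = (n:ℝ) • D := by
    have h1 : Mᵀ * M = Uᵀ * (Xᵀ * X) * U := by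
      simp only [hM, Matrix.transpose_mul, Matrix.mul_assoc]
    rw [h1, hXtX, Matrix.mul_smul, Matrix.smul_mul]
    congr 1
    calc Uᵀ * (U * D * Uᵀ) * U = (Uᵀ * U) * D * (Uᵀ * U) := by simp only [Matrix.mul_assoc]
    _ = D := by rw [hU, Matrix.one_mul, Matrix.mul_one]
  have hcol : ∀ j, ∑ i, M i j ^ 2 = (n:ℝ) * lam j := by
    intro j
    have h := congrArg (fun A => A j j) hMtM
    simp only [Matrix.mul_apply, Matrix.transpose_apply, Matrix.smul_apply, hD,
      Matrix.diagonal_apply_eq, smul_eq_mul] at h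
    simpa [pow_two] using h
  have hnl : ∀ j, (0:ℝ) < (n:ℝ) * lam j := fun j => mul_pos hn' (hlam j)
  set w : Fin r → Fin n → ℝ := fun j i => M i j / Real.sqrt ((n:ℝ) * lam j) with hw
  have hwunit : ∀ j, ∑ i, (w j i)^2 = 1 := by
    intro j
    simp only [hw, div_pow, ← Finset.sum_div]
    rw [hcol j, Real.sq_sqrt (hnl j).le, div_self (hnl j).ne']
  -- bad events
  set Bad : Fin r → Set Ω := fun j => {ω | t₀ ≤ |∑ i, w j i * ε ω i|} with hBad
  have hBadMeas : ∀ j, MeasurableSet (Bad j) := by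
    intro j
    have hms : Measurable fun ω => |∑ i, w j i * ε ω i| :=
      (Finset.measurable_sum _ (fun i _ =>
        (measurable_const.mul ((measurable_pi_apply i).comp hε)))).abs
    exact measurableSet_le measurable_const hms
  have hBadP : ∀ j, P (Bad j) ≤ ENNReal.ofReal (δ / r) := by
    intro j
    have h := hsubw (w j) (hwunit j) t₀ ht₀
    have he : 2 * Real.exp (-((t₀ / σ) ^ α)) = δ / r := by
      have h1 : t₀ / σ = L := by rw [ht₀def, mul_div_cancel_left₀ _ hσ.ne']
      have hLα : L ^ α = Real.log (2 * r / δ) := by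
        rw [hLdef, ← Real.rpow_mul hlog.le, one_div, inv_mul_cancel₀ hα.1.ne', Real.rpow_one]
      have hpos : (0:ℝ) < 2 * r / δ := div_pos (by nlinarith [hr']) hδ.1
      rw [h1, hLα, Real.exp_neg, Real.exp_log hpos]
      field_simp
    rw [← he]; exact h
  have hUnionP : P (⋃ j, Bad j) ≤ ENNReal.ofReal δ := by
    calc P (⋃ j, Bad j) ≤ ∑' j, P (Bad j) := measure_iUnion_le _
    _ = ∑ j, P (Bad j) := tsum_fintype _
    _ ≤ ∑ j : Fin r, ENNReal.ofReal (δ / r) := Finset.sum_le_sum (fun j _ => hBadP j)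
    _ = (r : ENNReal) * ENNReal.ofReal (δ / r) := by
        rw [Finset.sum_const, Finset.card_univ, Fintype.card_fin, nsmul_eq_mul]
    _ = ENNReal.ofReal ((r:ℝ) * (δ / r)) := by
        rw [ENNReal.ofReal_mul (by positivity : (0:ℝ) ≤ (r:ℝ)), ENNReal.ofReal_natCast]
    _ = ENNReal.ofReal δ := by rw [mul_div_cancel₀ _ hr'.ne']
  have hEmeas : MeasurableSet (⋃ j, Bad j) := MeasurableSet.iUnion hBadMeas
  have hPE : ENNReal.ofReal (1 - δ) ≤ P (⋃ j, Bad j)ᶜ := by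
    rw [prob_compl_eq_one_sub hEmeas]
    calc ENNReal.ofReal (1 - δ) = 1 - ENNReal.ofReal δ := by
          rw [ENNReal.ofReal_sub _ hδ.1.le, ENNReal.ofReal_one]
    _ ≤ 1 - P (⋃ j, Bad j) := tsub_le_tsub_left hUnionP 1
  refine le_trans hPE (measure_mono ?_)
  intro ω hω
  simp only [Set.mem_compl_iff, Set.mem_iUnion, not_exists, hBad, Set.mem_setOf_eq, not_le] at hω
  simp only [Set.mem_setOf_eq]
  -- deterministic part
  have hDU : Uᵀ * (Xᵀ * X) = (n:ℝ) • (D * Uᵀ) := by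
    rw [hXtX, Matrix.mul_smul]
    congr 1
    calc Uᵀ * (U * D * Uᵀ) = (Uᵀ * U) * (D * Uᵀ) := by simp only [Matrix.mul_assoc]
    _ = D * Uᵀ := by rw [hU, Matrix.one_mul]
  have e3 : Uᵀ * Xᵀ = Mᵀ := by rw [hM, Matrix.transpose_mul]
  have hsg : ∀ j, (Uᵀ *ᵥ (Xᵀ *ᵥ (X *ᵥ β + ε ω))) j
      = (n:ℝ) * (lam j * (Uᵀ *ᵥ β) j) + ∑ i, M i j * ε ω i := by
    intro j
    have e1 : Uᵀ *ᵥ (Xᵀ *ᵥ (X *ᵥ β + ε ω))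
        = (Mᵀ * X) *ᵥ β + Mᵀ *ᵥ ε ω := by
      rw [Matrix.mulVec_add, Matrix.mulVec_add, Matrix.mulVec_mulVec,
        Matrix.mulVec_mulVec, Matrix.mulVec_mulVec, e3]
    have e2 : Mᵀ * X = (n:ℝ) • (D * Uᵀ) := by
      rw [hM, Matrix.transpose_mul, Matrix.mul_assoc, hDU]
    rw [e1, e2, Matrix.smul_mulVec, ← Matrix.mulVec_mulVec]
    simp only [Pi.add_apply, Pi.smul_apply, smul_eq_mul, hD, Matrix.mulVec_diagonal]
    congr 1
  have hMSE : ∀ g : Fin r → ℝ,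
      (U *ᵥ g - β) ⬝ᵥ (((n:ℝ)⁻¹ • (Xᵀ * X)) *ᵥ (U *ᵥ g - β))
        = ∑ j, lam j * (g j - (Uᵀ *ᵥ β) j)^2 := by
    intro g
    rw [hSig]
    have e1 : (U * D * Uᵀ) *ᵥ (U *ᵥ g - β) = U *ᵥ (D *ᵥ (Uᵀ *ᵥ (U *ᵥ g - β))) := by
      rw [Matrix.mulVec_mulVec, Matrix.mulVec_mulVec]
    have e2 : Uᵀ *ᵥ (U *ᵥ g - β) = fun j => g j - (Uᵀ *ᵥ β) j := by
      rw [Matrix.mulVec_sub, Matrix.mulVec_mulVec, hU, Matrix.one_mulVec]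
      rfl
    rw [e1, e2, Matrix.dotProduct_mulVec, ← Matrix.mulVec_transpose, e2]
    simp only [dotProduct, hD, Matrix.mulVec_diagonal]
    exact Finset.sum_congr rfl fun j _ => by ring
  have key : ∀ j : Fin r, lam j * ((lam j ^ ((-(1:ℝ) - φ)/2) *
        T (lam j ^ ((φ - 1)/2) * (Uᵀ *ᵥ (Xᵀ *ᵥ (X *ᵥ β + ε ω))) j / (n:ℝ)))
          - (Uᵀ *ᵥ β) j)^2
      ≤ K^2 * (min ((lam j0 / lam j) ^ (φ/2) * (σ * ρ))
          |Real.sqrt (lam j) * (Uᵀ *ᵥ β) j|)^2 := by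
    intro j
    have hpow1 : lam j ^ ((φ-1)/2) * lam j = lam j ^ ((φ+1)/2) := by
      nth_rewrite 2 [← Real.rpow_one (lam j)]
      rw [← Real.rpow_add (hlam j)]
      congr 1
      ring
    have heq : lam j ^ ((φ - 1)/2) * (Uᵀ *ᵥ (Xᵀ *ᵥ (X *ᵥ β + ε ω))) j / (n:ℝ)
        - lam j ^ ((φ+1)/2) * (Uᵀ *ᵥ β) j
        = lam j ^ ((φ-1)/2) * (∑ i, M i j * ε ω i) / n := by
      rw [hsg j]
      field_simp
      linear_combination ((n:ℝ) * (Uᵀ *ᵥ β) j) * hpow1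
    have hwe : ∑ i, w j i * ε ω i = (∑ i, M i j * ε ω i) / Real.sqrt ((n:ℝ) * lam j) := by
      rw [Finset.sum_div]
      exact Finset.sum_congr rfl fun i _ => by rw [hw]; exact div_mul_eq_mul_div _ _ _
    have hsb : |∑ i, M i j * ε ω i| ≤ Real.sqrt ((n:ℝ) * lam j) * t₀ := by
      have h := (hω j).le
      rw [hwe, abs_div, abs_of_pos (Real.sqrt_pos.2 (hnl j))] at h
      have := (div_le_iff₀ (Real.sqrt_pos.2 (hnl j))).1 h
      linarith [this]
    have hkey : lam j ^ ((φ-1)/2) * Real.sqrt ((n:ℝ) * lam j) / n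
        = lam j ^ (φ/2) / Real.sqrt n := by
      have h2 : lam j ^ ((φ-1)/2) * lam j ^ ((1:ℝ)/2) = lam j ^ (φ/2) := by
        rw [← Real.rpow_add (hlam j)]
        congr 1
        ring
      have hnn : (n:ℝ) = Real.sqrt n * Real.sqrt n := (Real.mul_self_sqrt hn'.le).symm
      rw [Real.sqrt_mul hn'.le,
        show Real.sqrt (lam j) = lam j ^ ((1:ℝ)/2) from Real.sqrt_eq_rpow _]
      rw [div_eq_div_iff (ne_of_gt hn') (ne_of_gt hsqn)]
      linear_combination (Real.sqrt n * Real.sqrt n) * h2 - lam j ^ (φ/2) * hnn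
    have hza : |lam j ^ ((φ - 1)/2) * (Uᵀ *ᵥ (Xᵀ *ᵥ (X *ᵥ β + ε ω))) j / (n:ℝ)
        - lam j ^ ((φ+1)/2) * (Uᵀ *ᵥ β) j| ≤ τ / 2 := by
      rw [heq, abs_div, abs_mul, abs_of_pos (Real.rpow_pos_of_pos (hlam j) _),
        abs_of_pos hn']
      calc lam j ^ ((φ-1)/2) * |∑ i, M i j * ε ω i| / n
          ≤ lam j ^ ((φ-1)/2) * (Real.sqrt ((n:ℝ)*lam j) * t₀) / n := by
            gcongr
            exact (Real.rpow_pos_of_pos (hlam j) _).le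
      _ = (lam j ^ ((φ-1)/2) * Real.sqrt ((n:ℝ)*lam j) / n) * t₀ := by ring
      _ = lam j ^ (φ/2) / Real.sqrt n * t₀ := by rw [hkey]
      _ ≤ lam j0 ^ (φ/2) / Real.sqrt n * t₀ := by
            have hrr : lam j ^ (φ/2) ≤ lam j0 ^ (φ/2) :=
              Real.rpow_le_rpow (hlam j).le (hlam1 j) (by positivity)
            gcongr
      _ = τ / 2 := by
            rw [hτ, hρ, ht₀def]
            field_simp
    exact gct_coord _ hK32 hKc (hlam j0) (hlam j) hτ hτpos hza (hT1 _ _ hza) (hT2 _)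
  refine le_trans (le_of_eq (hMSE (fun j => lam j ^ ((-(1:ℝ) - φ)/2) *
    T (lam j ^ ((φ - 1)/2) * (Uᵀ *ᵥ (Xᵀ *ᵥ (X *ᵥ β + ε ω))) j / (n:ℝ))))) ?_
  rw [Finset.mul_sum]
  exact Finset.sum_le_sum fun j _ => key j
end

section
/- Theorem 4, lower bound (tightness of the GCT bound for soft thresholding). Assume the sub-Weibull noise assumption with parameters σ > 0 and α ∈ (0,2]. Let φ ≥ 0, fix δ ∈ (0,1), set ρ = (2/√n)(log(2r/δ))^{1/α} and take τ = λ̂₁^{φ/2}·σρ. Then there is an absolute constant c > 0 such that, with probability at least 1 − δ, the GCT estimator with the soft thresholding rule, β̂ = Û Λ̂^{−1−φ} SOFT_τ(Λ̂^{−1+φ} Û^⊤ X^⊤ Y / n), satisfies MSE(β̂) ≥ c · ∑_{j=1}^r min( (λ̂₁/λ̂_j)^{φ/2}·σρ, |θ_j| )². -/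
open MeasureTheory Matrix Finset

lemma soft_lb (τ θ w : ℝ) (hτ : 0 ≤ τ) (hw : |w| ≤ τ / 2) :
    min τ |θ| / 2 ≤ |soft τ (θ + w) - θ| := by
  set z := θ + w with hzdef
  by_cases hz : |z| ≤ τ
  · have hs : soft τ z = 0 := by
      unfold soft
      rcases eq_or_ne z 0 with h0 | h0
      · simp [h0]
      · have hzpos : 0 < |z| := abs_pos.2 h0
        have : 1 - τ / |z| ≤ 0 := by
          rw [sub_nonpos, le_div_iff₀ hzpos, one_mul]; exact hz
        rw [max_eq_right this, mul_zero]
    rw [hs, zero_sub, abs_neg]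
    calc min τ |θ| / 2 ≤ |θ| / 2 := by gcongr; exact min_le_right _ _
      _ ≤ |θ| := half_le_self (abs_nonneg _)
  · push_neg at hz
    have hz0 : z ≠ 0 := by
      intro h; rw [h, abs_zero] at hz; linarith
    have hzpos : 0 < |z| := abs_pos.2 hz0
    have hmax : max (1 - τ / |z|) 0 = 1 - τ / |z| := by
      apply max_eq_left
      have : τ / |z| < 1 := (div_lt_one hzpos).2 hz
      linarith
    have hs : soft τ z = z - τ * (z / |z|) := by
      unfold soft; rw [hmax]; ring
    have habs : abs (z / abs z) = 1 := by
      rw [abs_div, abs_abs, div_self (ne_of_gt hzpos)]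
    have h2 : |soft τ z - θ| = |w - τ * (z / |z|)| := by
      rw [hs]; congr 1; rw [hzdef]; ring
    have h1 : |τ * (z / |z|)| = τ := by
      rw [abs_mul, habs, mul_one, abs_of_nonneg hτ]
    have h3 : τ / 2 ≤ |w - τ * (z / |z|)| := by
      have := abs_sub_abs_le_abs_sub (τ * (z / |z|)) w
      rw [h1, abs_sub_comm] at this
      linarith
    rw [h2]
    calc min τ |θ| / 2 ≤ τ / 2 := by gcongr; exact min_le_left _ _
      _ ≤ _ := h3


lemma per_j (l1 l φ c A w : ℝ) (hl1 : 0 < l1) (hl : 0 < l) (hc : 0 ≤ c)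
    (hw : |w| ≤ l1 ^ (φ/2) * c / 2) :
    (min ((l1/l) ^ (φ/2) * c) |Real.sqrt l * A| / 2) ^ 2 ≤
      l * (l ^ ((-(1:ℝ) - φ)/2) *
        soft (l1 ^ (φ/2) * c) (l ^ ((φ-1)/2) * l * A + w) - A) ^ 2 := by
  set τ := l1 ^ (φ/2) * c with hτdef
  set s := l ^ (φ/2) with hsdef
  have hs : 0 < s := Real.rpow_pos_of_pos hl _
  have hτ0 : 0 ≤ τ := mul_nonneg (Real.rpow_pos_of_pos hl1 _).le hc
  set θ : ℝ := Real.sqrt l * A with hθdef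
  have hsl : l ^ ((φ-1)/2) * l = s * Real.sqrt l := by
    rw [Real.sqrt_eq_rpow, hsdef]
    nth_rewrite 2 [← Real.rpow_one l]
    rw [← Real.rpow_add hl, ← Real.rpow_add hl]
    ring_nf
  have hsinv : Real.sqrt l * l ^ ((-(1:ℝ) - φ)/2) = s⁻¹ := by
    rw [Real.sqrt_eq_rpow, hsdef, ← Real.rpow_add hl, ← Real.rpow_neg hl.le]
    congr 1; ring
  have harg : l ^ ((φ-1)/2) * l * A + w = s * θ + w := by
    rw [hsl, hθdef]; ring
  have hx := soft_lb τ (s * θ) w hτ0 hw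
  rw [← harg] at hx
  have hRHS : l * (l ^ ((-(1:ℝ) - φ)/2) *
      soft τ (l ^ ((φ-1)/2) * l * A + w) - A) ^ 2
      = ((soft τ (l ^ ((φ-1)/2) * l * A + w) - s * θ) / s) ^ 2 := by
    have hl' : l = Real.sqrt l * Real.sqrt l := (Real.mul_self_sqrt hl.le).symm
    nth_rewrite 1 [hl']
    rw [show Real.sqrt l * Real.sqrt l *
        (l ^ ((-(1:ℝ) - φ)/2) * soft τ (l ^ ((φ-1)/2) * l * A + w) - A) ^ 2
      = ((Real.sqrt l * l ^ ((-(1:ℝ) - φ)/2)) * soft τ (l ^ ((φ-1)/2) * l * A + w)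
        - Real.sqrt l * A) ^ 2 by ring]
    rw [hsinv, ← hθdef]
    field_simp
  rw [hRHS]
  have habsθ : |s * θ| = s * |θ| := by rw [abs_mul, abs_of_pos hs]
  have hmin : min τ |s * θ| / s = min ((l1/l) ^ (φ/2) * c) |θ| := by
    rw [habsθ, ← min_div_div_right hs.le]
    congr 1
    · rw [hτdef, hsdef, Real.div_rpow hl1.le hl.le]; ring
    · field_simp
  rw [← hmin]
  have hle : min τ |s * θ| / s / 2 ≤ |(soft τ (l ^ ((φ-1)/2) * l * A + w) - s * θ) / s| := by
    rw [abs_div, abs_of_pos hs]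
    rw [div_right_comm]
    gcongr
  calc (min τ |s * θ| / s / 2) ^ 2
      ≤ |(soft τ (l ^ ((φ-1)/2) * l * A + w) - s * θ) / s| ^ 2 := by
        apply pow_le_pow_left₀ _ hle
        have h0 : 0 ≤ min τ |s * θ| := le_min hτ0 (abs_nonneg _)
        positivity
    _ = _ := sq_abs _

/-- Theorem 4, lower bound: tightness of the GCT bound for soft thresholding.
There is an absolute constant `c > 0` such that for any fixed design model with sub-Weibull
noise, `φ ≥ 0`, `δ ∈ (0,1)`, `ρ = (2/√n)(log(2r/δ))^{1/α}` and threshold `τ = λ̂₁^{φ/2} σρ`,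
the GCT estimator with the soft thresholding rule satisfies with probability `≥ 1 − δ`:
`MSE(β̂) ≥ c ∑_j min((λ̂₁/λ̂_j)^{φ/2} σρ, |θ_j|)²`. -/
theorem stmt_12 :
    ∃ c : ℝ, 0 < c ∧
      ∀ (Ω : Type) (_ : MeasurableSpace Ω) (P : Measure Ω) (_ : IsProbabilityMeasure P)
        (n d r : ℕ) (_hn : 0 < n) (hr : 0 < r)
        (X : Matrix (Fin n) (Fin d) ℝ) (β : Fin d → ℝ)
        (U : Matrix (Fin d) (Fin r) ℝ) (lam : Fin r → ℝ),
        Uᵀ * U = 1 →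
        (∀ j, 0 < lam j) →
        (∀ j k : Fin r, j ≤ k → lam k ≤ lam j) →
        (n : ℝ)⁻¹ • (Xᵀ * X) = U * Matrix.diagonal lam * Uᵀ →
        ∀ (ε : Ω → Fin n → ℝ), Measurable ε →
        ∀ (σ α : ℝ), 0 < σ → α ∈ Set.Ioc (0:ℝ) 2 →
        (∀ w : Fin n → ℝ, ∑ i, (w i) ^ 2 = 1 → ∀ t : ℝ, 0 < t →
          P {ω | t ≤ |∑ i, w i * ε ω i|} ≤ ENNReal.ofReal (2 * Real.exp (-((t / σ) ^ α)))) →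
        ∀ (φ : ℝ), 0 ≤ φ →
        ∀ δ : ℝ, δ ∈ Set.Ioo (0:ℝ) 1 →
        ∀ ρ τ : ℝ,
          ρ = 2 / Real.sqrt n * Real.log (2 * r / δ) ^ (1 / α) →
          τ = lam ⟨0, hr⟩ ^ (φ / 2) * (σ * ρ) →
        (let θ : Fin r → ℝ := fun j => Real.sqrt (lam j) * (Uᵀ.mulVec β) j
         let bhat : Ω → Fin d → ℝ := fun ω => U.mulVec fun j =>
           lam j ^ ((-(1:ℝ) - φ) / 2) *
             soft τ (lam j ^ ((φ - 1) / 2) * (Uᵀ.mulVec (Xᵀ.mulVec (X.mulVec β + ε ω))) j / n)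
         let MSE : (Fin d → ℝ) → ℝ := fun b =>
           (b - β) ⬝ᵥ (((n : ℝ)⁻¹ • (Xᵀ * X)).mulVec (b - β))
         ENNReal.ofReal (1 - δ) ≤
           P {ω | c * ∑ j, (min ((lam ⟨0, hr⟩ / lam j) ^ (φ / 2) * (σ * ρ)) |θ j|) ^ 2 ≤
             MSE (bhat ω)}) := by
  refine ⟨1/4, by norm_num, ?_⟩
  intro Ω _ P _ n d r hn hr X β U lam hU hlam hmono h ε _hε σ α hσ hα hsub φ hφ δ hδ ρ τ hρ hτ
  intro θ bhat MSE
  have hn' : (0:ℝ) < n := Nat.cast_pos.mpr hn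
  have hr' : (1:ℝ) ≤ r := Nat.one_le_cast.mpr hr
  obtain ⟨hδ0, hδ1⟩ := hδ
  have hαpos : 0 < α := hα.1
  have hL : 0 < Real.log (2 * r / δ) := by
    apply Real.log_pos
    rw [lt_div_iff₀ hδ0]
    nlinarith
  set L := Real.log (2 * r / δ) with hLdef
  have hLα : 0 < L ^ (1/α) := Real.rpow_pos_of_pos hL _
  have hsn : 0 < Real.sqrt n := Real.sqrt_pos.mpr hn'
  have hρpos : 0 < ρ := by rw [hρ]; positivity
  have hl0 : 0 < lam ⟨0, hr⟩ := hlam _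
  have hτpos : 0 < τ := by
    rw [hτ]
    have := Real.rpow_pos_of_pos hl0 (φ/2)
    positivity
  have hσρ : 0 ≤ σ * ρ := by positivity
  -- matrix facts
  have hXtX : Xᵀ * X = (n:ℝ) • (U * Matrix.diagonal lam * Uᵀ) := by
    rw [← h, smul_smul, mul_inv_cancel₀ (ne_of_gt hn'), one_smul]
  have hUXX : Uᵀ * (Xᵀ * X) = (n:ℝ) • (Matrix.diagonal lam * Uᵀ) := by
    rw [hXtX, Matrix.mul_smul]
    congr 1
    rw [Matrix.mul_assoc U, ← Matrix.mul_assoc Uᵀ, hU, Matrix.one_mul]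
  have hUXXU : Uᵀ * (Xᵀ * X) * U = (n:ℝ) • Matrix.diagonal lam := by
    rw [hUXX, Matrix.smul_mul]
    congr 1
    rw [Matrix.mul_assoc, hU, Matrix.mul_one]
  have hcol : ∀ j, ∑ i, ((X*U) i j)^2 = (n:ℝ) * lam j := by
    intro j
    have h1 : ((X*U)ᵀ * (X*U)) j j = ∑ i, ((X*U) i j)^2 := by
      simp only [Matrix.mul_apply, Matrix.transpose_apply, sq]
    have h2 : (X*U)ᵀ * (X*U) = (n:ℝ) • Matrix.diagonal lam := by
      rw [Matrix.transpose_mul, ← hUXXU, Matrix.mul_assoc, Matrix.mul_assoc,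
        ← Matrix.mul_assoc Xᵀ]
    rw [← h1, h2]
    simp [Matrix.diagonal_apply_eq]
  set u : Fin r → Fin n → ℝ := fun j i => (X*U) i j / Real.sqrt ((n:ℝ) * lam j) with hu
  have hunit : ∀ j, ∑ i, (u j i)^2 = 1 := by
    intro j
    have hpos : 0 < (n:ℝ) * lam j := mul_pos hn' (hlam j)
    simp only [hu, div_pow, Real.sq_sqrt hpos.le]
    rw [← Finset.sum_div, hcol j, div_self (ne_of_gt hpos)]
  have hS : ∀ ω j, (Uᵀ.mulVec (Xᵀ.mulVec (ε ω))) j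
      = Real.sqrt ((n:ℝ) * lam j) * ∑ i, u j i * ε ω i := by
    intro ω j
    have hpos : 0 < Real.sqrt ((n:ℝ) * lam j) :=
      Real.sqrt_pos.mpr (mul_pos hn' (hlam j))
    rw [Matrix.mulVec_mulVec, ← Matrix.transpose_mul, Finset.mul_sum]
    simp only [Matrix.mulVec, dotProduct, Matrix.transpose_apply, hu]
    refine Finset.sum_congr rfl fun i _ => ?_
    rw [show Real.sqrt ((n:ℝ)*lam j) * ((X*U) i j / Real.sqrt ((n:ℝ)*lam j) * ε ω i)
      = Real.sqrt ((n:ℝ)*lam j) * ((X*U) i j * ε ω i) / Real.sqrt ((n:ℝ)*lam j) by ring]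
    exact (mul_div_cancel_left₀ _ (ne_of_gt hpos)).symm
  set w : Ω → Fin r → ℝ := fun ω j =>
    lam j ^ ((φ-1)/2) * ((Uᵀ.mulVec (Xᵀ.mulVec (ε ω))) j) / n with hwdef
  set t0 := σ * L ^ (1/α) with ht0def
  have ht0 : 0 < t0 := by positivity
  have hscal : ∀ j, lam j ^ ((φ-1)/2) * Real.sqrt ((n:ℝ) * lam j) / n
      = lam j ^ (φ/2) / Real.sqrt n := by
    intro j
    have h1 : lam j ^ ((φ-1)/2) * lam j ^ ((1:ℝ)/2) = lam j ^ (φ/2) := by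
      rw [← Real.rpow_add (hlam j)]; congr 1; ring
    have h2 : (n:ℝ) = Real.sqrt n * Real.sqrt n := (Real.mul_self_sqrt hn'.le).symm
    rw [Real.sqrt_mul hn'.le, Real.sqrt_eq_rpow (lam j)]
    rw [div_eq_div_iff (by positivity) (ne_of_gt hsn)]
    calc lam j ^ ((φ-1)/2) * (Real.sqrt n * lam j ^ ((1:ℝ)/2)) * Real.sqrt n
        = (lam j ^ ((φ-1)/2) * lam j ^ ((1:ℝ)/2)) * (Real.sqrt n * Real.sqrt n) := by ring
      _ = lam j ^ (φ/2) * n := by rw [h1, ← h2]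
  have hwabs : ∀ ω j, |w ω j| = lam j ^ (φ/2) / Real.sqrt n * |∑ i, u j i * ε ω i| := by
    intro ω j
    have : w ω j = (lam j ^ ((φ-1)/2) * Real.sqrt ((n:ℝ) * lam j) / n) * ∑ i, u j i * ε ω i := by
      rw [hwdef]; dsimp only; rw [hS ω j]; ring
    rw [this, hscal, abs_mul, abs_of_nonneg]
    have := Real.rpow_pos_of_pos (hlam j) (φ/2)
    positivity
  set G := {ω | ∀ j, |w ω j| ≤ τ / 2} with hGdef
  -- complement covered by tail events
  have hGc : Gᶜ ⊆ ⋃ j, {ω | t0 ≤ |∑ i, u j i * ε ω i|} := by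
    intro ω hω
    simp only [hGdef, Set.mem_compl_iff, Set.mem_setOf_eq, not_forall, not_le] at hω
    obtain ⟨j, hj⟩ := hω
    refine Set.mem_iUnion.mpr ⟨j, ?_⟩
    simp only [Set.mem_setOf_eq]
    rw [hwabs ω j] at hj
    have hlj : 0 < lam j ^ (φ/2) := Real.rpow_pos_of_pos (hlam j) _
    have hpow : lam j ^ (φ/2) ≤ lam ⟨0, hr⟩ ^ (φ/2) :=
      Real.rpow_le_rpow (hlam j).le (hmono ⟨0, hr⟩ j (Fin.le_def.mpr (Nat.zero_le _)))
        (by positivity)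
    have h1 : τ / 2 * Real.sqrt n < lam j ^ (φ/2) * |∑ i, u j i * ε ω i| := by
      calc τ / 2 * Real.sqrt n
          < lam j ^ (φ/2) / Real.sqrt n * |∑ i, u j i * ε ω i| * Real.sqrt n := by
            exact mul_lt_mul_of_pos_right hj hsn
        _ = lam j ^ (φ/2) * |∑ i, u j i * ε ω i| := by field_simp
    have h2 : t0 * lam j ^ (φ/2) ≤ τ / 2 * Real.sqrt n := by
      rw [hτ, hρ, ht0def]
      have : lam ⟨0, hr⟩ ^ (φ/2) * (σ * (2 / Real.sqrt n * L ^ (1/α))) / 2 * Real.sqrt n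
          = σ * L ^ (1/α) * lam ⟨0, hr⟩ ^ (φ/2) := by
        field_simp
      rw [this]
      have hLα' : (0:ℝ) ≤ σ * L ^ (1/α) := by positivity
      exact mul_le_mul_of_nonneg_left hpow hLα'
    have h3 : t0 * lam j ^ (φ/2) < lam j ^ (φ/2) * |∑ i, u j i * ε ω i| :=
      lt_of_le_of_lt h2 h1
    nlinarith [abs_nonneg (∑ i, u j i * ε ω i)]
  -- tail bound per coordinate
  have hBj : ∀ j : Fin r, P {ω | t0 ≤ |∑ i, u j i * ε ω i|} ≤ ENNReal.ofReal (δ / r) := by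
    intro j
    refine le_trans (hsub (u j) (hunit j) t0 ht0) ?_
    apply ENNReal.ofReal_le_ofReal
    have hexp : (t0 / σ) ^ α = L := by
      rw [ht0def, mul_div_cancel_left₀ _ (ne_of_gt hσ)]
      rw [← Real.rpow_mul hL.le, one_div_mul_cancel (ne_of_gt hαpos), Real.rpow_one]
    rw [hexp, Real.exp_neg, Real.exp_log (by positivity : (0:ℝ) < 2 * r / δ)]
    apply le_of_eq
    rw [eq_div_iff (by positivity : (r:ℝ) ≠ 0)]
    field_simp
  have hPGc : P Gᶜ ≤ ENNReal.ofReal δ := by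
    calc P Gᶜ ≤ P (⋃ j, {ω | t0 ≤ |∑ i, u j i * ε ω i|}) := measure_mono hGc
      _ ≤ ∑' j, P {ω | t0 ≤ |∑ i, u j i * ε ω i|} := measure_iUnion_le _
      _ ≤ ∑' (y : Fin r), ENNReal.ofReal (δ / r) := ENNReal.tsum_le_tsum hBj
      _ = ∑ y : Fin r, ENNReal.ofReal (δ / r) := tsum_fintype _
      _ = (r : ENNReal) * ENNReal.ofReal (δ / r) := by
          rw [Finset.sum_const, Finset.card_univ, Fintype.card_fin, nsmul_eq_mul]
      _ = ENNReal.ofReal δ := by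
          rw [← ENNReal.ofReal_natCast r, ← ENNReal.ofReal_mul (Nat.cast_nonneg r)]
          congr 1
          field_simp
  -- deterministic part
  have hGsub : G ⊆ {ω | 1/4 * ∑ j, (min ((lam ⟨0, hr⟩ / lam j) ^ (φ / 2) * (σ * ρ)) |θ j|) ^ 2 ≤
      MSE (bhat ω)} := by
    intro ω hω
    simp only [hGdef, Set.mem_setOf_eq] at hω ⊢
    set v : Fin r → ℝ := fun j =>
      lam j ^ ((-(1:ℝ) - φ) / 2) *
        soft τ (lam j ^ ((φ - 1) / 2) * (Uᵀ.mulVec (Xᵀ.mulVec (X.mulVec β + ε ω))) j / n)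
      with hvdef
    have hbhat : bhat ω = U.mulVec v := rfl
    set A := Uᵀ.mulVec β with hA
    have hz : ∀ j, lam j ^ ((φ - 1) / 2) * (Uᵀ.mulVec (Xᵀ.mulVec (X.mulVec β + ε ω))) j / n
        = lam j ^ ((φ - 1) / 2) * lam j * A j + w ω j := by
      intro j
      have hsplit : Uᵀ.mulVec (Xᵀ.mulVec (X.mulVec β + ε ω))
          = Uᵀ.mulVec (Xᵀ.mulVec (X.mulVec β)) + Uᵀ.mulVec (Xᵀ.mulVec (ε ω)) := by
        rw [Matrix.mulVec_add, Matrix.mulVec_add]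
      have hfirst : Uᵀ.mulVec (Xᵀ.mulVec (X.mulVec β)) j = (n:ℝ) * (lam j * A j) := by
        rw [Matrix.mulVec_mulVec, Matrix.mulVec_mulVec, Matrix.mul_assoc, hUXX]
        rw [Matrix.smul_mulVec, ← Matrix.mulVec_mulVec]
        simp only [Pi.smul_apply, smul_eq_mul, Matrix.mulVec_diagonal, hA]
      rw [hsplit]
      simp only [Pi.add_apply]
      rw [hfirst, hwdef]
      dsimp only
      field_simp
    have hMSE : MSE (bhat ω) = ∑ j, lam j * (v j - A j)^2 := by
      show (U.mulVec v - β) ⬝ᵥ (((n : ℝ)⁻¹ • (Xᵀ * X)).mulVec (U.mulVec v - β)) = _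
      rw [h]
      have he : Uᵀ.mulVec (U.mulVec v - β) = v - A := by
        rw [Matrix.mulVec_sub, Matrix.mulVec_mulVec, hU, Matrix.one_mulVec, hA]
      rw [Matrix.mul_assoc U, ← Matrix.mulVec_mulVec, Matrix.dotProduct_mulVec,
        ← Matrix.mulVec_transpose, he, ← Matrix.mulVec_mulVec, he]
      simp only [dotProduct, Matrix.mulVec_diagonal, Pi.sub_apply]
      exact Finset.sum_congr rfl fun j _ => by ring
    rw [hMSE]
    calc (1/4 : ℝ) * ∑ j, (min ((lam ⟨0, hr⟩ / lam j) ^ (φ / 2) * (σ * ρ)) |θ j|) ^ 2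
        = ∑ j, (min ((lam ⟨0, hr⟩ / lam j) ^ (φ / 2) * (σ * ρ)) |θ j| / 2) ^ 2 := by
          rw [Finset.mul_sum]
          exact Finset.sum_congr rfl fun j _ => by ring
      _ ≤ ∑ j, lam j * (v j - A j) ^ 2 := by
          refine Finset.sum_le_sum fun j _ => ?_
          have hwj : |w ω j| ≤ lam ⟨0, hr⟩ ^ (φ/2) * (σ * ρ) / 2 := by
            rw [← hτ]; exact hω j
          have := per_j (lam ⟨0, hr⟩) (lam j) φ (σ * ρ) (A j) (w ω j)
            hl0 (hlam j) hσρ hwj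
          rw [← hz j, ← hτ] at this
          exact this
  -- conclude
  calc ENNReal.ofReal (1 - δ) = 1 - ENNReal.ofReal δ := by
        rw [ENNReal.ofReal_sub _ hδ0.le, ENNReal.ofReal_one]
    _ ≤ P G := by
        rw [tsub_le_iff_right]
        calc (1:ENNReal) = P Set.univ := measure_univ.symm
          _ = P (G ∪ Gᶜ) := by rw [Set.union_compl_self]
          _ ≤ P G + P Gᶜ := measure_union_le _ _
          _ ≤ P G + ENNReal.ofReal δ := add_le_add_right hPGc _
    _ ≤ P _ := measure_mono hGsub
end

section
/- Corollary 1 (effective-rank bound for GCT). Under the assumptions of Theorem 4 (sub-Weibull noise with parameters σ, α; generalized thresholding function with constant c₀; φ ≥ 0; δ ∈ (0,1); ρ = (2/√n)(log(2r/δ))^{1/α}; threshold τ = λ̂₁^{φ/2}σρ), there is a constant C depending only on c₀ such that, with probability at least 1 − δ, the GCT estimator β̂ satisfies MSE(β̂) ≤ C · ( ‖Σ̂‖·‖β‖₂² + σ·‖Σ̂‖^{1/2}·‖β‖₂·r_eff[Σ̂]^{1/2} ) · (log(2r/δ))^{2/((2+φ)α)} / n^{1/(2+φ)}, where r_eff[Σ̂]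 = Tr(Σ̂)/‖Σ̂‖ and ‖·‖ is the spectral norm. -/
open MeasureTheory Matrix Finset
open scoped ENNReal

private lemma holder2 {r : ℕ} (x y : Fin r → ℝ) (hx : ∀ i, 0 ≤ x i) (hy : ∀ i, 0 ≤ y i)
    {p q : ℝ} (hp : 0 < p) (hq : 0 < q) (hpq : p + q = 1) :
    ∑ i, x i ^ p * y i ^ q ≤ (∑ i, x i) ^ p * (∑ i, y i) ^ q := by
  have hX0 : 0 ≤ ∑ i, x i := Finset.sum_nonneg fun i _ => hx i
  have hY0 : 0 ≤ ∑ i, y i := Finset.sum_nonneg fun i _ => hy i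
  rcases hX0.eq_or_lt with hX | hX
  · have h0 : ∀ i ∈ Finset.univ, x i = 0 :=
      (Finset.sum_eq_zero_iff_of_nonneg (fun i _ => hx i)).1 hX.symm
    have : ∀ i ∈ (Finset.univ : Finset (Fin r)), x i ^ p * y i ^ q = 0 := by
      intro i hi
      rw [h0 i hi, Real.zero_rpow hp.ne', zero_mul]
    rw [Finset.sum_eq_zero this, ← hX, Real.zero_rpow hp.ne', zero_mul]
  rcases hY0.eq_or_lt with hY | hY
  · have h0 : ∀ i ∈ Finset.univ, y i = 0 :=
      (Finset.sum_eq_zero_iff_of_nonneg (fun i _ => hy i)).1 hY.symm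
    have : ∀ i ∈ (Finset.univ : Finset (Fin r)), x i ^ p * y i ^ q = 0 := by
      intro i hi
      rw [h0 i hi, Real.zero_rpow hq.ne', mul_zero]
    rw [Finset.sum_eq_zero this, ← hY, Real.zero_rpow hq.ne', mul_zero]
  set X := ∑ i, x i
  set Y := ∑ i, y i
  have hXp : (0:ℝ) < X ^ p := Real.rpow_pos_of_pos hX _
  have hYq : (0:ℝ) < Y ^ q := Real.rpow_pos_of_pos hY _
  have key : ∀ i, x i ^ p * y i ^ q ≤ X ^ p * Y ^ q * (p * (x i / X) + q * (y i / Y)) := by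
    intro i
    have h1 : (x i / X) ^ p * (y i / Y) ^ q ≤ p * (x i / X) + q * (y i / Y) :=
      Real.geom_mean_le_arith_mean2_weighted hp.le hq.le
        (div_nonneg (hx i) hX0) (div_nonneg (hy i) hY0) hpq
    have h2 : x i ^ p * y i ^ q = X ^ p * Y ^ q * ((x i / X) ^ p * (y i / Y) ^ q) := by
      rw [Real.div_rpow (hx i) hX0, Real.div_rpow (hy i) hY0]
      field_simp
    rw [h2]
    exact mul_le_mul_of_nonneg_left h1 (by positivity)
  calc ∑ i, x i ^ p * y i ^ q
      ≤ ∑ i, X ^ p * Y ^ q * (p * (x i / X) + q * (y i / Y)) :=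
        Finset.sum_le_sum fun i _ => key i
    _ = X ^ p * Y ^ q * ∑ i, (p * (x i / X) + q * (y i / Y)) := by rw [Finset.mul_sum]
    _ = X ^ p * Y ^ q := by
        rw [Finset.sum_add_distrib, ← Finset.mul_sum, ← Finset.mul_sum,
          ← Finset.sum_div, ← Finset.sum_div]
        rw [div_self hX.ne', div_self hY.ne']
        linear_combination (X ^ p * Y ^ q) * hpq

set_option maxHeartbeats 2000000 in
/-- Corollary 1, effective-rank bound for GCT: under the assumptions of
Theorem 4 there is a constant `C` depending only on the thresholding constant `c₀` such that
with probability `≥ 1 − δ`,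
`MSE(β̂) ≤ C (‖Σ̂‖‖β‖₂² + σ‖Σ̂‖^{1/2}‖β‖₂ r_eff[Σ̂]^{1/2}) (log(2r/δ))^{2/((2+φ)α)} / n^{1/(2+φ)}`,
where `r_eff[Σ̂] = Tr(Σ̂)/‖Σ̂‖` and `‖Σ̂‖ = λ̂₁`. -/
theorem stmt_13 (c₀ : ℝ) (hc₀ : 0 < c₀) :
    ∃ C : ℝ, 0 < C ∧
      ∀ (Ω : Type) (_ : MeasurableSpace Ω) (P : Measure Ω) (_ : IsProbabilityMeasure P)
        (n d r : ℕ) (_hn : 0 < n) (hr : 0 < r)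
        (X : Matrix (Fin n) (Fin d) ℝ) (β : Fin d → ℝ)
        (U : Matrix (Fin d) (Fin r) ℝ) (lam : Fin r → ℝ),
        Uᵀ * U = 1 →
        (∀ j, 0 < lam j) →
        (∀ j k : Fin r, j ≤ k → lam k ≤ lam j) →
        (n : ℝ)⁻¹ • (Xᵀ * X) = U * Matrix.diagonal lam * Uᵀ →
        ∀ (ε : Ω → Fin n → ℝ), Measurable ε →
        ∀ (σ α : ℝ), 0 < σ → α ∈ Set.Ioc (0:ℝ) 2 →
        (∀ w : Fin n → ℝ, ∑ i, (w i) ^ 2 = 1 → ∀ t : ℝ, 0 < t →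
          P {ω | t ≤ |∑ i, w i * ε ω i|} ≤ ENNReal.ofReal (2 * Real.exp (-((t / σ) ^ α)))) →
        ∀ (φ : ℝ), 0 ≤ φ →
        ∀ δ : ℝ, δ ∈ Set.Ioo (0:ℝ) 1 →
        ∀ ρ τ : ℝ,
          ρ = 2 / Real.sqrt n * Real.log (2 * r / δ) ^ (1 / α) →
          τ = lam ⟨0, hr⟩ ^ (φ / 2) * (σ * ρ) →
        ∀ T : ℝ → ℝ,
          (∀ z z' : ℝ, |z - z'| ≤ τ / 2 → |T z| ≤ c₀ * |z'|) →
          (∀ z : ℝ, |T z - z| ≤ τ) →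
        (let bhat : Ω → Fin d → ℝ := fun ω => U.mulVec fun j =>
           lam j ^ ((-(1:ℝ) - φ) / 2) *
             T (lam j ^ ((φ - 1) / 2) * (Uᵀ.mulVec (Xᵀ.mulVec (X.mulVec β + ε ω))) j / n)
         let MSE : (Fin d → ℝ) → ℝ := fun b =>
           (b - β) ⬝ᵥ (((n : ℝ)⁻¹ • (Xᵀ * X)).mulVec (b - β))
         let reff : ℝ := Matrix.trace ((n : ℝ)⁻¹ • (Xᵀ * X)) / lam ⟨0, hr⟩
         ENNReal.ofReal (1 - δ) ≤
           P {ω | MSE (bhat ω) ≤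
             C * (lam ⟨0, hr⟩ * (∑ i, (β i) ^ 2) +
                 σ * Real.sqrt (lam ⟨0, hr⟩) * Real.sqrt (∑ i, (β i) ^ 2) * Real.sqrt reff) *
               (Real.log (2 * r / δ) ^ (2 / ((2 + φ) * α)) / (n : ℝ) ^ (1 / (2 + φ)))}) := by
  classical
  refine ⟨2 * (c₀ + 2) ^ 2, by positivity, ?_⟩
  intro Ω _inst P _instP n d r hn hr X β U lam hU hlampos hmono hEig ε _hεmeas σ α hσ hα
    hTail φ hφ δ hδ ρ τ hρdef hτdef T hT1 hT2
  intro bhat MSE reff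
  obtain ⟨hδ0, hδ1⟩ := hδ
  obtain ⟨hα0, _hα2⟩ := hα
  have hn0 : (0:ℝ) < n := by exact_mod_cast hn
  have hr0 : (0:ℝ) < r := by exact_mod_cast hr
  have hr1 : (1:ℝ) ≤ r := by exact_mod_cast hr
  set lam0 := lam ⟨0, hr⟩ with hlam0def
  have hlam0 : 0 < lam0 := hlampos _
  have hlamle : ∀ j, lam j ≤ lam0 := fun j => hmono ⟨0, hr⟩ j (by simp [Fin.le_def])
  have hPlogpos : 0 < Real.log (2 * r / δ) := Real.log_pos (by
    rw [lt_div_iff₀ hδ0]; nlinarith)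
  set Plog := Real.log (2 * r / δ) with hPlogdef
  set L := Plog ^ (1 / α) with hLdef
  have hL : 0 < L := Real.rpow_pos_of_pos hPlogpos _
  have hsn : (0:ℝ) < Real.sqrt n := Real.sqrt_pos.2 hn0
  have hρ : 0 < ρ := by rw [hρdef]; positivity
  have hτ : 0 < τ := by rw [hτdef]; positivity
  set D := Matrix.diagonal lam with hDdef
  -- matrix algebra facts
  have hXtX : Xᵀ * X = (n:ℝ) • (U * D * Uᵀ) := by
    calc Xᵀ * X = (n:ℝ) • ((n:ℝ)⁻¹ • (Xᵀ * X)) := (smul_inv_smul₀ hn0.ne' _).symm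
      _ = (n:ℝ) • (U * D * Uᵀ) := by rw [hEig]
  have hUDU : Uᵀ * (U * D * Uᵀ) * U = D := by
    calc Uᵀ * (U * D * Uᵀ) * U = Uᵀ * U * D * (Uᵀ * U) := by
          simp only [Matrix.mul_assoc]
      _ = D := by rw [hU, Matrix.one_mul, Matrix.mul_one]
  have hMtM : (X * U)ᵀ * (X * U) = (n:ℝ) • D := by
    rw [Matrix.transpose_mul]
    calc Uᵀ * Xᵀ * (X * U) = Uᵀ * (Xᵀ * X) * U := by simp only [Matrix.mul_assoc]
      _ = Uᵀ * ((n:ℝ) • (U * D * Uᵀ)) * U := by rw [hXtX]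
      _ = (n:ℝ) • (Uᵀ * (U * D * Uᵀ) * U) := by rw [Matrix.mul_smul, Matrix.smul_mul]
      _ = (n:ℝ) • D := by rw [hUDU]
  have hUX : Uᵀ * (Xᵀ * X) = (n:ℝ) • (D * Uᵀ) := by
    rw [hXtX, Matrix.mul_smul]
    congr 1
    calc Uᵀ * (U * D * Uᵀ) = Uᵀ * U * (D * Uᵀ) := by simp only [Matrix.mul_assoc]
      _ = D * Uᵀ := by rw [hU, Matrix.one_mul]
  have hcol : ∀ j, ∑ i, (X * U) i j ^ 2 = n * lam j := by
    intro j
    have h1 : ((X * U)ᵀ * (X * U)) j j = ∑ i, (X * U) i j ^ 2 := by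
      rw [Matrix.mul_apply]
      refine Finset.sum_congr rfl fun i _ => ?_
      rw [Matrix.transpose_apply, sq]
    rw [hMtM] at h1
    rw [← h1]
    simp [hDdef, Matrix.smul_apply, smul_eq_mul]
  have hnl : ∀ j, (0:ℝ) < n * lam j := fun j => mul_pos hn0 (hlampos j)
  set w : Fin r → Fin n → ℝ := fun j i => (X * U) i j / Real.sqrt (n * lam j) with hwdef
  have hwnorm : ∀ j, ∑ i, (w j i) ^ 2 = 1 := by
    intro j
    simp only [hwdef, div_pow, Real.sq_sqrt (hnl j).le]
    rw [← Finset.sum_div, hcol j, div_self (hnl j).ne']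
  -- probability part
  set bad : Fin r → Set Ω := fun j => {ω | σ * L ≤ |∑ i, w j i * ε ω i|} with hbaddef
  have hbadP : ∀ j, P (bad j) ≤ ENNReal.ofReal (δ / r) := by
    intro j
    refine (hTail (w j) (hwnorm j) (σ * L) (by positivity)).trans (le_of_eq ?_)
    congr 1
    have h1 : σ * L / σ = L := by field_simp
    have h2 : L ^ α = Plog := by
      rw [hLdef, ← Real.rpow_mul hPlogpos.le, one_div, inv_mul_cancel₀ hα0.ne',
        Real.rpow_one]
    rw [h1, h2, Real.exp_neg, Real.exp_log (by positivity), inv_div]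
    rw [mul_div_assoc', mul_comm 2 δ, mul_comm 2 (r:ℝ),
      mul_div_mul_right δ (r:ℝ) two_ne_zero]
  have hbadU : P (⋃ j, bad j) ≤ ENNReal.ofReal δ := by
    refine (measure_iUnion_le _).trans ?_
    rw [tsum_fintype]
    calc ∑ j : Fin r, P (bad j) ≤ ∑ _j : Fin r, ENNReal.ofReal (δ / r) :=
          Finset.sum_le_sum fun j _ => hbadP j
      _ = (r : ENNReal) * ENNReal.ofReal (δ / r) := by
          rw [Finset.sum_const, Finset.card_univ, Fintype.card_fin, nsmul_eq_mul]
      _ = ENNReal.ofReal δ := by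
          rw [← ENNReal.ofReal_natCast r, ← ENNReal.ofReal_mul (by positivity)]
          congr 1
          field_simp
  have hgoodP : ENNReal.ofReal (1 - δ) ≤ P ((⋃ j, bad j)ᶜ) := by
    have h1 : (1:ENNReal) ≤ P ((⋃ j, bad j)ᶜ) + ENNReal.ofReal δ := by
      calc (1:ENNReal) = P Set.univ := measure_univ.symm
        _ ≤ P ((⋃ j, bad j)ᶜ ∪ ⋃ j, bad j) :=
            measure_mono (Set.compl_union_self _).symm.subset
        _ ≤ P ((⋃ j, bad j)ᶜ) + P (⋃ j, bad j) := measure_union_le _ _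
        _ ≤ P ((⋃ j, bad j)ᶜ) + ENNReal.ofReal δ := add_le_add le_rfl hbadU
    rw [ENNReal.ofReal_sub _ hδ0.le, ENNReal.ofReal_one]
    exact tsub_le_iff_right.2 h1
  refine le_trans hgoodP (measure_mono ?_)
  intro ω hω
  simp only [Set.mem_setOf_eq]
  have hg : ∀ j, |∑ i, w j i * ε ω i| ≤ σ * L := by
    intro j
    by_contra h
    exact hω (Set.mem_iUnion.2 ⟨j, (not_le.1 h).le⟩)
  set b : Fin r → ℝ := Uᵀ.mulVec β with hbdef
  set G : Fin r → ℝ := fun j => (Uᵀ.mulVec (Xᵀ.mulVec (ε ω))) j / n with hGdef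
  have hGval : ∀ j, (Uᵀ.mulVec (Xᵀ.mulVec (ε ω))) j
      = Real.sqrt (n * lam j) * ∑ i, w j i * ε ω i := by
    intro j
    have hsj : Real.sqrt ((n:ℝ) * lam j) ≠ 0 := (Real.sqrt_pos.2 (hnl j)).ne'
    have h1 : (Uᵀ.mulVec (Xᵀ.mulVec (ε ω))) j = ∑ i, (X * U) i j * ε ω i := by
      rw [Matrix.mulVec_mulVec, ← Matrix.transpose_mul]
      simp [Matrix.mulVec, dotProduct]
    rw [h1, Finset.mul_sum]
    refine Finset.sum_congr rfl fun i _ => ?_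
    rw [hwdef]
    field_simp
  have hGb : ∀ j, |G j| ≤ Real.sqrt (lam j) * (σ * ρ / 2) := by
    intro j
    have e1 : G j = Real.sqrt (lam j) / Real.sqrt n * ∑ i, w j i * ε ω i := by
      rw [hGdef]
      simp only []
      rw [hGval j, Real.sqrt_mul hn0.le]
      rw [show Real.sqrt (n:ℝ) * Real.sqrt (lam j) * (∑ i, w j i * ε ω i) / (n:ℝ)
          = Real.sqrt (lam j) * (Real.sqrt (n:ℝ) / (n:ℝ)) * (∑ i, w j i * ε ω i) by ring,
        Real.sqrt_div_self']
      ring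
    have e2 : σ * ρ / 2 = σ * L / Real.sqrt n := by
      rw [hρdef]; field_simp
    rw [e1, abs_mul, abs_of_nonneg (by positivity : (0:ℝ) ≤ Real.sqrt (lam j) / Real.sqrt n)]
    calc Real.sqrt (lam j) / Real.sqrt n * |∑ i, w j i * ε ω i|
        ≤ Real.sqrt (lam j) / Real.sqrt n * (σ * L) :=
          mul_le_mul_of_nonneg_left (hg j) (by positivity)
      _ = Real.sqrt (lam j) * (σ * L / Real.sqrt n) := by ring
      _ = Real.sqrt (lam j) * (σ * ρ / 2) := by rw [e2]
  have hDU : ∀ (v : Fin d → ℝ) (j : Fin r), ((D * Uᵀ).mulVec v) j = lam j * (Uᵀ.mulVec v) j := by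
    intro v j
    rw [← Matrix.mulVec_mulVec, hDdef, Matrix.mulVec_diagonal]
  have hVsplit : ∀ j, (Uᵀ.mulVec (Xᵀ.mulVec (X.mulVec β + ε ω))) j
      = (n:ℝ) * (lam j * b j) + (n:ℝ) * G j := by
    intro j
    rw [Matrix.mulVec_add, Matrix.mulVec_add, Pi.add_apply]
    congr 1
    · have h1 : Uᵀ.mulVec (Xᵀ.mulVec (X.mulVec β)) = (Uᵀ * (Xᵀ * X)).mulVec β := by
        simp only [Matrix.mulVec_mulVec, Matrix.mul_assoc]
      rw [h1, hUX, Matrix.smul_mulVec, Pi.smul_apply, smul_eq_mul, hDU β j, ← hbdef]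
    · rw [hGdef]
      simp only []
      field_simp
  have hz : ∀ j, lam j ^ ((φ - 1) / 2) * (Uᵀ.mulVec (Xᵀ.mulVec (X.mulVec β + ε ω))) j / n
      = lam j ^ ((φ - 1) / 2) * (lam j * b j + G j) := by
    intro j
    rw [hVsplit j, mul_div_assoc]
    congr 1
    field_simp
  set cv : Fin r → ℝ := fun j => lam j ^ ((-(1:ℝ) - φ) / 2) *
      T (lam j ^ ((φ - 1) / 2) * (Uᵀ.mulVec (Xᵀ.mulVec (X.mulVec β + ε ω))) j / n) with hcvdef
  have hbhat : bhat ω = U.mulVec cv := rfl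
  have hquad : MSE (bhat ω) = ∑ j, lam j * (cv j - b j) ^ 2 := by
    have h0 : MSE (bhat ω) = (U.mulVec cv - β) ⬝ᵥ ((U * D * Uᵀ).mulVec (U.mulVec cv - β)) := by
      show (bhat ω - β) ⬝ᵥ (((n : ℝ)⁻¹ • (Xᵀ * X)).mulVec (bhat ω - β)) = _
      rw [hbhat, hEig]
    rw [h0]
    have h1 : (U * D * Uᵀ).mulVec (U.mulVec cv - β)
        = U.mulVec (D.mulVec (Uᵀ.mulVec (U.mulVec cv - β))) := by
      simp only [Matrix.mulVec_mulVec, Matrix.mul_assoc]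
    rw [h1, Matrix.dotProduct_mulVec, ← Matrix.mulVec_transpose]
    have h2 : Uᵀ.mulVec (U.mulVec cv - β) = cv - b := by
      rw [Matrix.mulVec_sub, Matrix.mulVec_mulVec, hU, Matrix.one_mulVec, ← hbdef]
    rw [h2, hDdef]
    simp only [dotProduct, Matrix.mulVec_diagonal, Pi.sub_apply]
    exact Finset.sum_congr rfl fun j _ => by ring
  set p : ℝ := 1 / (2 + φ) with hpdef
  have h2φ : (0:ℝ) < 2 + φ := by linarith
  have hp : 0 < p := by rw [hpdef]; positivity
  set q : ℝ := (1 + φ) / (2 + φ) with hqdef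
  have hq : 0 < q := by rw [hqdef]; positivity
  have hpq : p + q = 1 := by rw [hpdef, hqdef]; field_simp; ring
  have hcoord : ∀ j, lam j * (cv j - b j) ^ 2 ≤
      (c₀ + 2) ^ 2 * min (lam j * b j ^ 2) (lam j ^ (-φ) * τ ^ 2) := by
    intro j
    have hl : 0 < lam j := hlampos j
    set μ := lam j ^ ((1 + φ) / 2) * b j with hμdef
    set z := lam j ^ ((φ - 1) / 2) * (Uᵀ.mulVec (Xᵀ.mulVec (X.mulVec β + ε ω))) j / n with hzdef
    have hz' : z = lam j ^ ((φ - 1) / 2) * (lam j * b j + G j) := by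
      rw [hzdef]; exact hz j
    have hzμ : z - μ = lam j ^ ((φ - 1) / 2) * G j := by
      rw [hz', hμdef]
      have e : lam j ^ ((φ - 1) / 2) * lam j = lam j ^ ((1 + φ) / 2) := by
        have h := Real.rpow_add hl ((φ - 1) / 2) 1
        rw [Real.rpow_one] at h
        rw [← h]
        congr 1
        ring
      rw [mul_add, ← mul_assoc, e]
      ring
    have hzμb : |z - μ| ≤ τ / 2 := by
      rw [hzμ, abs_mul, abs_of_nonneg (Real.rpow_nonneg hl.le _)]
      have h2 : lam j ^ ((φ - 1) / 2) * Real.sqrt (lam j) = lam j ^ (φ / 2) := by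
        rw [Real.sqrt_eq_rpow, ← Real.rpow_add hl]
        congr 1
        ring
      have h3 : lam j ^ (φ / 2) ≤ lam0 ^ (φ / 2) :=
        Real.rpow_le_rpow hl.le (hlamle j) (by positivity)
      calc lam j ^ ((φ - 1) / 2) * |G j|
          ≤ lam j ^ ((φ - 1) / 2) * (Real.sqrt (lam j) * (σ * ρ / 2)) :=
            mul_le_mul_of_nonneg_left (hGb j) (Real.rpow_nonneg hl.le _)
        _ = lam j ^ (φ / 2) * (σ * ρ / 2) := by rw [← mul_assoc, h2]
        _ ≤ lam0 ^ (φ / 2) * (σ * ρ / 2) := mul_le_mul_of_nonneg_right h3 (by positivity)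
        _ = τ / 2 := by rw [hτdef]; ring
    have hTz : |T z - μ| ≤ (c₀ + 1) * |μ| := by
      have h1 := hT1 z μ hzμb
      calc |T z - μ| ≤ |T z| + |μ| := by
            rw [sub_eq_add_neg]
            exact (abs_add_le _ _).trans (by rw [abs_neg])
        _ ≤ c₀ * |μ| + |μ| := by linarith
        _ = (c₀ + 1) * |μ| := by ring
    have hTz2 : |T z - μ| ≤ (c₀ + 2) * τ := by
      calc |T z - μ| ≤ |T z - z| + |z - μ| := abs_sub_le _ _ _
        _ ≤ τ + τ / 2 := add_le_add (hT2 z) hzμb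
        _ ≤ (c₀ + 2) * τ := by linarith [mul_nonneg hc₀.le hτ.le]
    have hsq1 : (T z - μ) ^ 2 ≤ (c₀ + 1) ^ 2 * μ ^ 2 := by
      have h := pow_le_pow_left₀ (abs_nonneg (T z - μ)) hTz 2
      rwa [sq_abs, mul_pow, sq_abs] at h
    have hsq2 : (T z - μ) ^ 2 ≤ (c₀ + 2) ^ 2 * τ ^ 2 := by
      have h := pow_le_pow_left₀ (abs_nonneg (T z - μ)) hTz2 2
      rwa [sq_abs, mul_pow] at h
    have hbj : b j = lam j ^ ((-(1:ℝ) - φ) / 2) * μ := by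
      rw [hμdef, ← mul_assoc, ← Real.rpow_add hl,
        show (-(1:ℝ) - φ) / 2 + (1 + φ) / 2 = 0 by ring, Real.rpow_zero, one_mul]
    have hcvj : cv j = lam j ^ ((-(1:ℝ) - φ) / 2) * T z := rfl
    have hcb : cv j - b j = lam j ^ ((-(1:ℝ) - φ) / 2) * (T z - μ) := by
      rw [hcvj, hbj, mul_sub]
    have hkey : lam j * (cv j - b j) ^ 2 = lam j ^ (-φ) * (T z - μ) ^ 2 := by
      rw [hcb, mul_pow, ← mul_assoc]
      congr 1
      rw [← Real.rpow_two (lam j ^ ((-(1:ℝ) - φ) / 2)), ← Real.rpow_mul hl.le]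
      have h := Real.rpow_add hl 1 ((-(1:ℝ) - φ) / 2 * 2)
      rw [Real.rpow_one] at h
      rw [← h, show (1:ℝ) + (-(1:ℝ) - φ) / 2 * 2 = -φ by ring]
    rw [hkey]
    have hmin : (T z - μ) ^ 2 ≤ (c₀ + 2) ^ 2 * min (μ ^ 2) (τ ^ 2) := by
      rcases le_total (μ ^ 2) (τ ^ 2) with h | h
      · rw [min_eq_left h]
        calc (T z - μ) ^ 2 ≤ (c₀ + 1) ^ 2 * μ ^ 2 := hsq1
          _ ≤ (c₀ + 2) ^ 2 * μ ^ 2 :=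
            mul_le_mul_of_nonneg_right
              (pow_le_pow_left₀ (by linarith : (0:ℝ) ≤ c₀ + 1) (by linarith : c₀ + 1 ≤ c₀ + 2) 2)
              (sq_nonneg μ)
      · rw [min_eq_right h]
        exact hsq2
    calc lam j ^ (-φ) * (T z - μ) ^ 2
        ≤ lam j ^ (-φ) * ((c₀ + 2) ^ 2 * min (μ ^ 2) (τ ^ 2)) :=
          mul_le_mul_of_nonneg_left hmin (Real.rpow_nonneg hl.le _)
      _ = (c₀ + 2) ^ 2 * (lam j ^ (-φ) * min (μ ^ 2) (τ ^ 2)) := by ring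
      _ = (c₀ + 2) ^ 2 * min (lam j ^ (-φ) * μ ^ 2) (lam j ^ (-φ) * τ ^ 2) := by
          rw [mul_min_of_nonneg _ _ (Real.rpow_nonneg hl.le (-φ))]
      _ = (c₀ + 2) ^ 2 * min (lam j * b j ^ 2) (lam j ^ (-φ) * τ ^ 2) := by
          congr 2
          rw [hμdef, mul_pow, ← Real.rpow_two (lam j ^ ((1 + φ) / 2)), ← Real.rpow_mul hl.le,
            ← mul_assoc, ← Real.rpow_add hl,
            show -φ + (1 + φ) / 2 * 2 = 1 by ring, Real.rpow_one]
  have hsum1 : MSE (bhat ω) ≤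
      (c₀ + 2) ^ 2 * ∑ j, min (lam j * b j ^ 2) (lam j ^ (-φ) * τ ^ 2) := by
    rw [hquad, Finset.mul_sum]
    exact Finset.sum_le_sum fun j _ => hcoord j
  set Bsq := ∑ i, β i ^ 2 with hBsqdef
  have hBsqnn : (0:ℝ) ≤ Bsq := Finset.sum_nonneg fun i _ => sq_nonneg _
  have hb2 : ∑ j, b j ^ 2 ≤ Bsq := by
    have h1 : ∑ j, b j ^ 2 = ∑ i, β i * (U.mulVec b) i := by
      have : β ⬝ᵥ (U.mulVec b) = ∑ j, b j ^ 2 := by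
        rw [Matrix.dotProduct_mulVec, ← Matrix.mulVec_transpose, ← hbdef]
        simp [dotProduct, sq]
      rw [← this]
      rfl
    have h2 : ∑ i, (U.mulVec b) i ^ 2 = ∑ j, b j ^ 2 := by
      have e1 : (U.mulVec b) ⬝ᵥ (U.mulVec b) = ∑ j, b j ^ 2 := by
        rw [Matrix.dotProduct_mulVec, ← Matrix.mulVec_transpose, Matrix.mulVec_mulVec, hU,
          Matrix.one_mulVec]
        simp [dotProduct, sq]
      rw [← e1]
      simp [dotProduct, sq]
    have hcs := Finset.sum_mul_sq_le_sq_mul_sq Finset.univ β (U.mulVec b)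
    rw [← h1, h2] at hcs
    have hS0 : (0:ℝ) ≤ ∑ j, b j ^ 2 := Finset.sum_nonneg fun j _ => sq_nonneg _
    rcases hS0.eq_or_lt with h0 | h0
    · rw [← h0]; exact hBsqnn
    · refine le_of_mul_le_mul_right ?_ h0
      calc (∑ j, b j ^ 2) * (∑ j, b j ^ 2) = (∑ j, b j ^ 2) ^ 2 := (sq _).symm
        _ ≤ Bsq * ∑ j, b j ^ 2 := hcs
  have hTr : Matrix.trace ((n:ℝ)⁻¹ • (Xᵀ * X)) = ∑ j, lam j := by
    rw [hEig, Matrix.trace_mul_cycle, hU, Matrix.one_mul, hDdef, Matrix.trace_diagonal]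
  set Tr := ∑ j, lam j with hTrdef
  have hTrpos : 0 < Tr := Finset.sum_pos (fun j _ => hlampos j) ⟨⟨0, hr⟩, Finset.mem_univ _⟩
  have hreff : reff = Tr / lam0 := by
    show Matrix.trace ((n:ℝ)⁻¹ • (Xᵀ * X)) / lam ⟨0, hr⟩ = Tr / lam0
    rw [hTr, ← hlam0def]
  have hminb : ∀ j, min (lam j * b j ^ 2) (lam j ^ (-φ) * τ ^ 2)
      ≤ (τ ^ 2) ^ p * (lam j ^ p * (b j ^ 2) ^ q) := by
    intro j
    have hl : 0 < lam j := hlampos j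
    have ha : (0:ℝ) ≤ lam j * b j ^ 2 := by positivity
    have hc : (0:ℝ) ≤ lam j ^ (-φ) * τ ^ 2 := by positivity
    have hmin0 : (0:ℝ) ≤ min (lam j * b j ^ 2) (lam j ^ (-φ) * τ ^ 2) := le_min ha hc
    rcases hmin0.eq_or_lt with h0 | h0
    · rw [← h0]
      positivity
    · have step : min (lam j * b j ^ 2) (lam j ^ (-φ) * τ ^ 2)
          ≤ (lam j * b j ^ 2) ^ q * (lam j ^ (-φ) * τ ^ 2) ^ p := by
        calc min (lam j * b j ^ 2) (lam j ^ (-φ) * τ ^ 2)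
            = min (lam j * b j ^ 2) (lam j ^ (-φ) * τ ^ 2) ^ q *
              min (lam j * b j ^ 2) (lam j ^ (-φ) * τ ^ 2) ^ p := by
              rw [← Real.rpow_add h0, show q + p = 1 by linarith, Real.rpow_one]
          _ ≤ _ := mul_le_mul (Real.rpow_le_rpow hmin0 (min_le_left _ _) hq.le)
              (Real.rpow_le_rpow hmin0 (min_le_right _ _) hp.le)
              (Real.rpow_nonneg hmin0 _) (Real.rpow_nonneg ha _)
      refine step.trans (le_of_eq ?_)
      rw [Real.mul_rpow hl.le (sq_nonneg _),
        Real.mul_rpow (Real.rpow_nonneg hl.le _) (sq_nonneg _),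
        ← Real.rpow_mul hl.le,
        show lam j ^ q * (b j ^ 2) ^ q * (lam j ^ (-φ * p) * (τ ^ 2) ^ p)
          = (τ ^ 2) ^ p * (lam j ^ q * lam j ^ (-φ * p) * (b j ^ 2) ^ q) by ring,
        ← Real.rpow_add hl, show q + -φ * p = p by rw [hpdef, hqdef]; field_simp; ring]
  have hS : ∑ j, min (lam j * b j ^ 2) (lam j ^ (-φ) * τ ^ 2)
      ≤ (τ ^ 2) ^ p * (Tr ^ p * (∑ j, b j ^ 2) ^ q) := by
    calc ∑ j, min (lam j * b j ^ 2) (lam j ^ (-φ) * τ ^ 2)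
        ≤ ∑ j, (τ ^ 2) ^ p * (lam j ^ p * (b j ^ 2) ^ q) :=
          Finset.sum_le_sum fun j _ => hminb j
      _ = (τ ^ 2) ^ p * ∑ j, lam j ^ p * (b j ^ 2) ^ q := by rw [Finset.mul_sum]
      _ ≤ (τ ^ 2) ^ p * (Tr ^ p * (∑ j, b j ^ 2) ^ q) :=
          mul_le_mul_of_nonneg_left
            (holder2 lam (fun j => b j ^ 2) (fun j => (hlampos j).le)
              (fun j => sq_nonneg _) hp hq hpq)
            (by positivity)
  have hτ2 : (τ ^ 2) ^ p
      = lam0 ^ (φ * p) * (σ ^ (2 * p) * ((2:ℝ) ^ (2 * p) * (L ^ (2 * p) / (n:ℝ) ^ p))) := by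
    have h1 : (τ ^ 2) ^ p = τ ^ (2 * p) := by
      rw [← Real.rpow_natCast τ 2, ← Real.rpow_mul hτ.le]
      norm_num
    rw [h1, hτdef, hρdef]
    rw [Real.mul_rpow (by positivity) (by positivity),
      Real.mul_rpow hσ.le (by positivity),
      Real.mul_rpow (by positivity) (by positivity),
      Real.div_rpow (by norm_num) (Real.sqrt_nonneg _),
      ← Real.rpow_mul hlam0.le,
      Real.sqrt_eq_rpow, ← Real.rpow_mul (le_of_lt hn0),
      show φ / 2 * (2 * p) = φ * p by ring,
      show 1 / 2 * (2 * p) = p by ring]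
    ring
  have hLgoal : L ^ (2 * p) = Plog ^ (2 / ((2 + φ) * α)) := by
    rw [hLdef, ← Real.rpow_mul hPlogpos.le]
    congr 1
    rw [hpdef]
    field_simp
  have h2p : 2 * p ≤ 1 := by
    rw [hpdef, show 2 * (1 / (2 + φ)) = 2 / (2 + φ) by ring, div_le_one h2φ]
    linarith
  have h22p : (2:ℝ) ^ (2 * p) ≤ 2 := by
    have h := Real.rpow_le_rpow_of_exponent_le (by norm_num : (1:ℝ) ≤ 2) h2p
    rwa [Real.rpow_one] at h
  have hgm : lam0 ^ (φ * p) * (σ ^ (2 * p) * (Tr ^ p * Bsq ^ q))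
      ≤ lam0 * Bsq + σ * Real.sqrt Tr * Real.sqrt Bsq := by
    have hA : (0:ℝ) ≤ lam0 * Bsq := by positivity
    have hB : (0:ℝ) ≤ σ * Real.sqrt Tr * Real.sqrt Bsq := by positivity
    have hw1 : (0:ℝ) ≤ φ * p := by positivity
    have hw2 : (0:ℝ) ≤ 2 * p := by positivity
    have hwsum : φ * p + 2 * p = 1 := by rw [hpdef]; field_simp; ring
    have hqe : φ * p + p = q := by rw [hpdef, hqdef]; field_simp; ring
    have hgm0 := Real.geom_mean_le_arith_mean2_weighted hw1 hw2 hA hB hwsum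
    have hid : (lam0 * Bsq) ^ (φ * p) * (σ * Real.sqrt Tr * Real.sqrt Bsq) ^ (2 * p)
        = lam0 ^ (φ * p) * (σ ^ (2 * p) * (Tr ^ p * Bsq ^ q)) := by
      rw [Real.mul_rpow hlam0.le hBsqnn,
        Real.mul_rpow (by positivity) (Real.sqrt_nonneg _),
        Real.mul_rpow hσ.le (Real.sqrt_nonneg _),
        Real.sqrt_eq_rpow Tr, Real.sqrt_eq_rpow Bsq,
        ← Real.rpow_mul hTrpos.le, ← Real.rpow_mul hBsqnn,
        show 1 / 2 * (2 * p) = p by ring]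
      have hBq : Bsq ^ (φ * p) * Bsq ^ p = Bsq ^ q := by
        rw [← Real.rpow_add' hBsqnn (by rw [hqe]; exact hq.ne'), hqe]
      calc lam0 ^ (φ * p) * Bsq ^ (φ * p) * (σ ^ (2 * p) * Tr ^ p * Bsq ^ p)
          = lam0 ^ (φ * p) * (σ ^ (2 * p) * (Tr ^ p * (Bsq ^ (φ * p) * Bsq ^ p))) := by ring
        _ = lam0 ^ (φ * p) * (σ ^ (2 * p) * (Tr ^ p * Bsq ^ q)) := by rw [hBq]
    calc lam0 ^ (φ * p) * (σ ^ (2 * p) * (Tr ^ p * Bsq ^ q))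
        = (lam0 * Bsq) ^ (φ * p) * (σ * Real.sqrt Tr * Real.sqrt Bsq) ^ (2 * p) := hid.symm
      _ ≤ φ * p * (lam0 * Bsq) + 2 * p * (σ * Real.sqrt Tr * Real.sqrt Bsq) := hgm0
      _ ≤ lam0 * Bsq + σ * Real.sqrt Tr * Real.sqrt Bsq :=
          add_le_add (mul_le_of_le_one_left hA (by linarith))
            (mul_le_of_le_one_left hB (by linarith))
  have hBterm : σ * Real.sqrt lam0 * Real.sqrt Bsq * Real.sqrt reff
      = σ * Real.sqrt Tr * Real.sqrt Bsq := by
    rw [hreff, Real.sqrt_div hTrpos.le lam0]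
    have hsl : Real.sqrt lam0 ≠ 0 := (Real.sqrt_pos.2 hlam0).ne'
    field_simp
  have hEnn : (0:ℝ) ≤ L ^ (2 * p) / (n:ℝ) ^ p := by positivity
  calc MSE (bhat ω)
      ≤ (c₀ + 2) ^ 2 * ∑ j, min (lam j * b j ^ 2) (lam j ^ (-φ) * τ ^ 2) := hsum1
    _ ≤ (c₀ + 2) ^ 2 * ((τ ^ 2) ^ p * (Tr ^ p * (∑ j, b j ^ 2) ^ q)) :=
        mul_le_mul_of_nonneg_left hS (by positivity)
    _ ≤ (c₀ + 2) ^ 2 * ((τ ^ 2) ^ p * (Tr ^ p * Bsq ^ q)) := by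
        have h := Real.rpow_le_rpow (Finset.sum_nonneg fun j _ => sq_nonneg (b j)) hb2 hq.le
        have h' : Tr ^ p * (∑ j, b j ^ 2) ^ q ≤ Tr ^ p * Bsq ^ q :=
          mul_le_mul_of_nonneg_left h (by positivity)
        exact mul_le_mul_of_nonneg_left
          (mul_le_mul_of_nonneg_left h' (by positivity)) (by positivity)
    _ = (c₀ + 2) ^ 2 * (lam0 ^ (φ * p) * (σ ^ (2 * p) * (Tr ^ p * Bsq ^ q))) *
        ((2:ℝ) ^ (2 * p) * (L ^ (2 * p) / (n:ℝ) ^ p)) := by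
        rw [hτ2]
        ring
    _ ≤ (c₀ + 2) ^ 2 * (lam0 * Bsq + σ * Real.sqrt Tr * Real.sqrt Bsq) *
        (2 * (L ^ (2 * p) / (n:ℝ) ^ p)) := by
        have hx1 : (0:ℝ) ≤ (c₀ + 2) ^ 2 := by positivity
        have hnn1 : (0:ℝ) ≤ lam0 ^ (φ * p) * (σ ^ (2 * p) * (Tr ^ p * Bsq ^ q)) := by positivity
        apply mul_le_mul
        · exact mul_le_mul_of_nonneg_left hgm hx1
        · exact mul_le_mul_of_nonneg_right h22p hEnn
        · positivity
        · positivity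
    _ = 2 * (c₀ + 2) ^ 2 * (lam0 * Bsq + σ * Real.sqrt Tr * Real.sqrt Bsq) *
        (L ^ (2 * p) / (n:ℝ) ^ p) := by ring
    _ = 2 * (c₀ + 2) ^ 2 *
        (lam0 * Bsq + σ * Real.sqrt lam0 * Real.sqrt Bsq * Real.sqrt reff) *
        (Plog ^ (2 / ((2 + φ) * α)) / (n:ℝ) ^ p) := by
        rw [hBterm, ← hLgoal]
end

section
/- Core deterministic inequality in the proof of Corollary 1. Let r ≥ 1, let λ̂₁ ≥ λ̂₂ ≥ … ≥ λ̂_r > 0, let φ ≥ 0, σ ≥ 0, ρ > 0, let v ∈ ℝ^r, and set θ_j = λ̂_j^{1/2}·v_j for j ∈ [r]. Then ∑_{j=1}^r min( (λ̂₁/λ̂_j)^{φ/2}·σρ, |θ_j| )² ≤ λ̂₁·‖v‖₂²·ρ^{2/(2+φ)} + σ·ρ^{2/(2+φ)}·‖θ‖₁, where ‖θ‖₁ = ∑_j |θ_j| and ‖v‖₂² = ∑_j v_j². -/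
open Finset

/-- core deterministic inequality in the proof of Corollary 1:
for decreasing positive `λ̂₁ ≥ … ≥ λ̂_r > 0`, `φ ≥ 0`, `σ ≥ 0`, `ρ > 0`, `v ∈ ℝ^r` and
`θ_j = λ̂_j^{1/2} v_j`, one has
`∑ j min((λ̂₁/λ̂_j)^{φ/2} σρ, |θ_j|)² ≤ λ̂₁ ‖v‖₂² ρ^{2/(2+φ)} + σ ρ^{2/(2+φ)} ‖θ‖₁`. -/
theorem stmt_14 (r : ℕ) (hr : 0 < r) (lam : Fin r → ℝ)
    (hpos : ∀ j, 0 < lam j) (hmono : ∀ j k : Fin r, j ≤ k → lam k ≤ lam j)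
    (φ σ ρ : ℝ) (hφ : 0 ≤ φ) (hσ : 0 ≤ σ) (hρ : 0 < ρ) (v : Fin r → ℝ) :
    ∑ j, (min ((lam ⟨0, hr⟩ / lam j) ^ (φ / 2) * (σ * ρ)) |Real.sqrt (lam j) * v j|) ^ 2 ≤
      lam ⟨0, hr⟩ * (∑ j, (v j) ^ 2) * ρ ^ (2 / (2 + φ)) +
        σ * ρ ^ (2 / (2 + φ)) * ∑ j, |Real.sqrt (lam j) * v j| := by
  set L1 : ℝ := lam ⟨0, hr⟩ with hL1
  set c : ℝ := ρ ^ (2 / (2 + φ)) with hc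
  have hcpos : 0 < c := Real.rpow_pos_of_pos hρ _
  have h2φ : (0:ℝ) < 2 + φ := by linarith
  have key : ∀ j : Fin r,
      (min ((L1 / lam j) ^ (φ / 2) * (σ * ρ)) |Real.sqrt (lam j) * v j|) ^ 2 ≤
        L1 * c * (v j) ^ 2 + σ * c * |Real.sqrt (lam j) * v j| := by
    intro j
    set A : ℝ := (L1 / lam j) ^ (φ / 2) * (σ * ρ) with hA
    set B : ℝ := |Real.sqrt (lam j) * v j| with hB
    have hAnn : 0 ≤ A := mul_nonneg (Real.rpow_nonneg (div_nonneg (hpos _).le (hpos j).le) _)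
      (mul_nonneg hσ hρ.le)
    have hBnn : 0 ≤ B := abs_nonneg _
    by_cases hcase : L1 * c ≤ lam j
    · -- use min ≤ A and min ≤ B
      have h1 : (min A B) ^ 2 ≤ A * B := by
        rw [sq]
        exact mul_le_mul (min_le_left _ _) (min_le_right _ _) (le_min hAnn hBnn) hAnn
      have hd : L1 / lam j ≤ c⁻¹ := by
        rw [div_le_iff₀ (hpos j)]
        have := (le_div_iff₀ hcpos).2 hcase
        calc L1 ≤ lam j / c := this
          _ = c⁻¹ * lam j := by ring
      have hrp : (L1 / lam j) ^ (φ / 2) ≤ ρ ^ (-(2 / (2 + φ)) * (φ / 2)) := by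
        have : c⁻¹ = ρ ^ (-(2 / (2 + φ))) := by
          rw [hc, ← Real.rpow_neg hρ.le]
        rw [Real.rpow_mul hρ.le, ← this]
        exact Real.rpow_le_rpow (div_nonneg (hpos _).le (hpos j).le) hd (by positivity)
      have hAc : A ≤ σ * c := by
        have h2 : ρ ^ (-(2 / (2 + φ)) * (φ / 2)) * ρ = c := by
          calc ρ ^ (-(2 / (2 + φ)) * (φ / 2)) * ρ
              = ρ ^ (-(2 / (2 + φ)) * (φ / 2)) * ρ ^ (1:ℝ) := by rw [Real.rpow_one]
            _ = ρ ^ (-(2 / (2 + φ)) * (φ / 2) + 1) := (Real.rpow_add hρ _ _).symm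
            _ = c := by
                rw [hc]
                congr 1
                field_simp
                ring
        calc A = (L1 / lam j) ^ (φ / 2) * ρ * σ := by rw [hA]; ring
          _ ≤ ρ ^ (-(2 / (2 + φ)) * (φ / 2)) * ρ * σ := by
              apply mul_le_mul_of_nonneg_right _ hσ
              exact mul_le_mul_of_nonneg_right hrp hρ.le
          _ = σ * c := by rw [h2]; ring
      have h3 : A * B ≤ σ * c * B := mul_le_mul_of_nonneg_right hAc hBnn
      have h4 : 0 ≤ L1 * c * (v j) ^ 2 := mul_nonneg (mul_nonneg (hpos _).le hcpos.le) (sq_nonneg _)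
      linarith
    · push_neg at hcase
      have h1 : (min A B) ^ 2 ≤ B ^ 2 := by
        apply pow_le_pow_left₀ (le_min hAnn hBnn) (min_le_right _ _)
      have h2 : B ^ 2 = lam j * (v j) ^ 2 := by
        rw [hB, sq_abs, mul_pow, Real.sq_sqrt (hpos j).le]
      have h3 : lam j * (v j) ^ 2 ≤ L1 * c * (v j) ^ 2 :=
        mul_le_mul_of_nonneg_right hcase.le (sq_nonneg _)
      have h4 : 0 ≤ σ * c * B := by positivity
      linarith
  calc ∑ j, (min ((L1 / lam j) ^ (φ / 2) * (σ * ρ)) |Real.sqrt (lam j) * v j|) ^ 2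
      ≤ ∑ j, (L1 * c * (v j) ^ 2 + σ * c * |Real.sqrt (lam j) * v j|) :=
        Finset.sum_le_sum fun j _ => key j
    _ = L1 * (∑ j, (v j) ^ 2) * c + σ * c * ∑ j, |Real.sqrt (lam j) * v j| := by
        rw [Finset.sum_add_distrib, ← Finset.mul_sum, ← Finset.mul_sum]
        ring
end
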